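/- arXiv:1903.06208 — 3 statements merged into one kernel-verified Lean document; each statement's English description precedes it below -/
import Mathlib

section
/- Let 0 < δ < 1 with 1/δ ∈ ℕ, z ∈ ℤ² and ρ ∈ Γ. Let w be a weight with [w]_{A^S_{1,ρ,z}} < ∞, where the side selection is the one produced by the face-selection algorithm (so that each ℓ_i meets at most A·δ^{−5/4} of the sets ℓ_1,…,ℓ_u for an absolute constant A). Then there is a constant C, independent of δ, w, f, ρ, z, such that ‖\tilde M_{ρ,δ} f‖_{L^1(Q_z,w)} ≤ C·δ^{−5/4}·[w]_{A^S_{1,ρ,z}}·‖f‖_{L^1(7Q_z,w)} for all f. -/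
open MeasureTheory Metric Set
open scoped ENNReal NNReal

noncomputable section

/-- Index of a `k`-face of an axis-parallel cube in `ℝⁿ`: a set of `k` "free" coordinates
together with a sign choice for the remaining coordinates (only the signs of coordinates
outside the free set matter). -/
abbrev FaceIdx (n k : ℕ) := {T : Finset (Fin n) // T.card = k} × (Fin n → Bool)

/-- The `k`-face of the axis-parallel cube centered at `x` with side length `2 r`
corresponding to the face index `F`. -/
def kFace {n : ℕ} (k : ℕ) (x : Fin n → ℝ) (r : ℝ) (F : FaceIdx n k) : Set (Fin n → ℝ) :=
  {y | (∀ i ∈ F.1.1, |y i - x i| ≤ r) ∧ ∀ i ∉ F.1.1, y i = x i + (if F.2 i then r else -r)}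

/-- The `δ`-neighborhood of a `k`-face. -/
def faceNbhd {n : ℕ} (k : ℕ) (δ : ℝ) (x : Fin n → ℝ) (r : ℝ) (F : FaceIdx n k) :
    Set (Fin n → ℝ) :=
  Metric.cthickening δ (kFace k x r F)

/-- The `δ`-neighborhood of the whole `k`-skeleton. -/
def skelNbhd {n : ℕ} (k : ℕ) (δ : ℝ) (x : Fin n → ℝ) (r : ℝ) : Set (Fin n → ℝ) :=
  ⋃ F : FaceIdx n k, faceNbhd k δ x r F

/-- The `k`-skeleton maximal function with width `δ` (with values in `ℝ≥0∞`):
`M^k_δ f (x) = sup_{1 ≤ r ≤ 2} min_j ⨍_{S^j_{k,δ}(x,r)} |f|`. -/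
def skelMax (n k : ℕ) (δ : ℝ) (f : (Fin n → ℝ) → ℝ) (x : Fin n → ℝ) : ℝ≥0∞ :=
  ⨆ r ∈ Set.Icc (1 : ℝ) 2, ⨅ F : FaceIdx n k,
    (volume (faceNbhd k δ x r F))⁻¹ * ∫⁻ y in faceNbhd k δ x r F, (‖f y‖₊ : ℝ≥0∞)

/-- `L^p` norm of an `ℝ≥0∞`-valued function. -/
def lpNormE {α : Type*} [MeasurableSpace α] (g : α → ℝ≥0∞) (p : ℝ) (μ : Measure α) : ℝ≥0∞ :=
  (∫⁻ x, g x ^ p ∂μ) ^ (1 / p)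

/-- The measure `w(x) dx` associated to a weight `w`. -/
def wMeasure {n : ℕ} (w : (Fin n → ℝ) → ℝ) : Measure (Fin n → ℝ) :=
  volume.withDensity fun x => ENNReal.ofReal (w x)

/-- Average of `g` over the set `A` (with respect to Lebesgue measure). -/
def ravg {n : ℕ} (A : Set (Fin n → ℝ)) (g : (Fin n → ℝ) → ℝ) : ℝ :=
  (volume A).toReal⁻¹ * ∫ y in A, g y

/-- The axis-parallel cube with center `c` and side length `s`. -/
def cube {n : ℕ} (c : Fin n → ℝ) (s : ℝ) : Set (Fin n → ℝ) :=
  {y | ∀ j, |y j - c j| ≤ s / 2}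

/-- The closed unit cube `Q_z` with lower-left vertex `z`. -/
def unitCube {n : ℕ} (z : Fin n → ℤ) : Set (Fin n → ℝ) :=
  {y | ∀ j, (z j : ℝ) ≤ y j ∧ y j ≤ (z j : ℝ) + 1}

/-- The cube `7 Q_z`: same center as `Q_z`, side length `7`. -/
def sevenCube {n : ℕ} (z : Fin n → ℤ) : Set (Fin n → ℝ) :=
  {y | ∀ j, |y j - ((z j : ℝ) + 1 / 2)| ≤ 7 / 2}

/-- The (half-open) grid cell `Q_z(m)` of side length `δ = 1/N` inside `Q_z`. -/
def gridCell {n : ℕ} (N : ℕ) (z : Fin n → ℤ) (m : Fin n → Fin N) : Set (Fin n → ℝ) :=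
  {y | ∀ j, (z j : ℝ) + (m j : ℝ) / N ≤ y j ∧ y j < (z j : ℝ) + ((m j : ℝ) + 1) / N}

/-- The center `x_m` of the grid cell `Q_z(m)`. -/
def gridCenter {n : ℕ} (N : ℕ) (z : Fin n → ℤ) (m : Fin n → Fin N) : Fin n → ℝ :=
  fun j => (z j : ℝ) + ((m j : ℝ) + 1 / 2) / N

/-- Membership in `Γ`: a radius function with values in `[1,2] ∩ δ ℤ`, `δ = 1/N`. -/
def inGamma {n : ℕ} (N : ℕ) (ρ : (Fin n → Fin N) → ℝ) : Prop :=
  ∀ m, ρ m ∈ Set.Icc (1 : ℝ) 2 ∧ ∃ t : ℤ, ρ m = (t : ℝ) / N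

/-- The `δ'`-neighborhood `ℓ_m` of the selected `k`-face of the skeleton
`S_k(x_m, ρ(x_m))`. -/
def selFace {n : ℕ} (k N : ℕ) (z : Fin n → ℤ) (ρ : (Fin n → Fin N) → ℝ)
    (sel : (Fin n → Fin N) → FaceIdx n k) (δ' : ℝ) (m : Fin n → Fin N) : Set (Fin n → ℝ) :=
  Metric.cthickening δ' (kFace k (gridCenter N z m) (ρ m) (sel m))

/-- The linearized `k`-skeleton maximal operator: on the cell `Q_z(m)` it equals the
average of `f` over the `δ'`-neighborhood of the selected face. -/
def linMax {n : ℕ} (k N : ℕ) (z : Fin n → ℤ) (ρ : (Fin n → Fin N) → ℝ)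
    (sel : (Fin n → Fin N) → FaceIdx n k) (δ' : ℝ) (f : (Fin n → ℝ) → ℝ)
    (x : Fin n → ℝ) : ℝ :=
  ∑ m : Fin n → Fin N, Set.indicator (gridCell N z m)
    (fun _ => (volume (selFace k N z ρ sel δ' m)).toReal⁻¹ *
      ∫ y in selFace k N z ρ sel δ' m, f y) x

/-- The local skeleton `A_p` constant `[w]_{A^{S_k}_{p,ρ,z}}` (for `1 < p < ∞`). -/
def ApLoc {n : ℕ} (k N : ℕ) (z : Fin n → ℤ) (ρ : (Fin n → Fin N) → ℝ)
    (sel : (Fin n → Fin N) → FaceIdx n k) (w : (Fin n → ℝ) → ℝ) (p : ℝ) : ℝ≥0∞ :=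
  ⨆ m : Fin n → Fin N,
    ((volume (selFace k N z ρ sel ((N : ℝ)⁻¹) m))⁻¹ *
        ∫⁻ y in gridCell N z m, ENNReal.ofReal (w y)) *
      ((volume (selFace k N z ρ sel ((N : ℝ)⁻¹) m))⁻¹ *
        ∫⁻ y in selFace k N z ρ sel ((N : ℝ)⁻¹) m,
          ENNReal.ofReal (w y) ^ (1 - p / (p - 1))) ^ (p - 1)

/-- The local skeleton `A_1` constant `[w]_{A^{S_k}_{1,ρ,z}}`. -/
def A1Loc {n : ℕ} (k N : ℕ) (z : Fin n → ℤ) (ρ : (Fin n → Fin N) → ℝ)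
    (sel : (Fin n → Fin N) → FaceIdx n k) (w : (Fin n → ℝ) → ℝ) : ℝ≥0∞ :=
  ⨆ m : Fin n → Fin N,
    ((volume (selFace k N z ρ sel ((N : ℝ)⁻¹) m))⁻¹ *
        ∫⁻ y in gridCell N z m, ENNReal.ofReal (w y)) *
      essSup (fun y => (ENNReal.ofReal (w y))⁻¹)
        (volume.restrict (selFace k N z ρ sel ((N : ℝ)⁻¹) m))

/-- The global skeleton `A_p` constant `[w]_{A^{S_k}_p}` (with the `A_1` version at `p = 1`). -/
def ApGlobal {n : ℕ} (k N : ℕ)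
    (sel : (Fin n → ℤ) → ((Fin n → Fin N) → ℝ) → (Fin n → Fin N) → FaceIdx n k)
    (w : (Fin n → ℝ) → ℝ) (p : ℝ) : ℝ≥0∞ :=
  if p = 1 then
    ⨆ z : Fin n → ℤ, ⨆ ρ : {ρ : (Fin n → Fin N) → ℝ // inGamma N ρ},
      A1Loc k N z ρ.1 (sel z ρ.1) w
  else
    ⨆ z : Fin n → ℤ, ⨆ ρ : {ρ : (Fin n → Fin N) → ℝ // inGamma N ρ},
      ApLoc k N z ρ.1 (sel z ρ.1) w p

/-- Helper: `ofReal (V.toReal⁻¹) ≤ V⁻¹` for every `V : ℝ≥0∞`. -/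
lemma ofReal_toReal_inv_le (V : ℝ≥0∞) : ENNReal.ofReal V.toReal⁻¹ ≤ V⁻¹ := by
  rcases eq_or_ne V ∞ with h | h
  · simp [h]
  rcases eq_or_ne V 0 with h0 | h0
  · simp [h0]
  have : ENNReal.ofReal V.toReal⁻¹ = (ENNReal.ofReal V.toReal)⁻¹ :=
    ENNReal.ofReal_inv_of_pos (ENNReal.toReal_pos h0 h)
  rw [this, ENNReal.ofReal_toReal h]

/-- endpoint `p = 1` local weighted bound for the linearized skeleton
maximal operator: `‖M̃_{ρ,δ} f‖_{L^1(Q_z,w)} ≤ C δ^{-5/4} [w]_{A^S_{1,ρ,z}} ‖f‖_{L^1(7Q_z,w)}`. -/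
theorem sufficient_local_p_one (A : ℝ) (hA : 0 < A) :
    ∃ C : ℝ, 0 < C ∧
      ∀ (N : ℕ), 1 < N → ∀ (δ : ℝ), δ = (N : ℝ)⁻¹ →
      ∀ (z : Fin 2 → ℤ) (ρ : (Fin 2 → Fin N) → ℝ), inGamma N ρ →
      ∀ sel : (Fin 2 → Fin N) → FaceIdx 2 1,
      (∀ m, ({m' : Fin 2 → Fin N |
          (selFace 1 N z ρ sel δ m ∩ selFace 1 N z ρ sel δ m').Nonempty}.ncard : ℝ) ≤
        A * δ ^ (-(5 : ℝ) / 4)) →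
      ∀ w : (Fin 2 → ℝ) → ℝ, (∀ x, 0 ≤ w x) → LocallyIntegrable w volume →
      A1Loc 1 N z ρ sel w ≠ ⊤ →
      ∀ f : (Fin 2 → ℝ) → ℝ,
        eLpNorm (linMax 1 N z ρ sel δ f) 1 ((wMeasure w).restrict (unitCube z)) ≤
          ENNReal.ofReal (C * δ ^ (-(5 : ℝ) / 4)) * A1Loc 1 N z ρ sel w *
            eLpNorm f 1 ((wMeasure w).restrict (sevenCube z)) := by
  classical
  refine ⟨A, hA, ?_⟩
  intro N hN δ hδ z ρ hρ sel hover w hw hwloc hK f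
  subst hδ
  have hN0 : (0 : ℝ) < N := by positivity
  have hδpos : (0 : ℝ) < (N : ℝ)⁻¹ := by positivity
  have hδle : ((N : ℝ)⁻¹ : ℝ) ≤ 1 := by
    rw [inv_le_one_iff₀]; right; exact_mod_cast hN.le
  -- abbreviations
  set L : (Fin 2 → Fin N) → Set (Fin 2 → ℝ) := fun m => selFace 1 N z ρ sel ((N : ℝ)⁻¹) m
    with hLdef
  set K : ℝ≥0∞ := A1Loc 1 N z ρ sel w with hKdef
  set B : ℝ≥0∞ := ENNReal.ofReal (A * ((N : ℝ)⁻¹) ^ (-(5 : ℝ) / 4)) with hBdef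
  -- geometry of the faces
  have hface_sub : ∀ m, kFace 1 (gridCenter N z m) (ρ m) (sel m) ⊆
      Metric.closedBall (gridCenter N z m) 2 := by
    intro m y hy
    rw [Metric.mem_closedBall]
    rw [dist_pi_le_iff (by norm_num : (0:ℝ) ≤ 2)]
    intro i
    rw [Real.dist_eq]
    by_cases hi : i ∈ (sel m).1.1
    · exact (hy.1 i hi).trans (hρ m).1.2
    · have h2 := hy.2 i hi
      have hr0 : (0:ℝ) ≤ ρ m := le_trans zero_le_one (hρ m).1.1
      rw [h2]
      split_ifs with hb
      · rw [add_sub_cancel_left, abs_of_nonneg hr0]; exact (hρ m).1.2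
      · rw [add_sub_cancel_left, abs_neg, abs_of_nonneg hr0]; exact (hρ m).1.2
  have hL_ball : ∀ m, L m ⊆ Metric.closedBall (gridCenter N z m) ((N : ℝ)⁻¹ + 2) := by
    intro m
    have h1 : L m ⊆ Metric.cthickening ((N : ℝ)⁻¹)
        (Metric.closedBall (gridCenter N z m) 2) :=
      Metric.cthickening_subset_of_subset _ (hface_sub m)
    rw [cthickening_closedBall hδpos.le (by norm_num : (0:ℝ) ≤ 2)] at h1
    exact h1
  have hLmeas : ∀ m, MeasurableSet (L m) :=
    fun m => Metric.isClosed_cthickening.measurableSet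
  have hcenter : ∀ m j, |gridCenter N z m j - ((z j : ℝ) + 1 / 2)| ≤ 1 / 2 := by
    intro m j
    have h0 : (0:ℝ) ≤ ((m j : ℝ) + 1 / 2) / N := by positivity
    have h1 : ((m j : ℝ) + 1 / 2) / N ≤ 1 := by
      rw [div_le_one hN0]
      have h2 : (m j : ℕ) + 1 ≤ N := (m j).isLt
      have : ((m j : ℕ) : ℝ) + 1 ≤ (N : ℝ) := by exact_mod_cast h2
      linarith
    have : gridCenter N z m j - ((z j : ℝ) + 1 / 2) = ((m j : ℝ) + 1 / 2) / N - 1 / 2 := by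
      simp only [gridCenter]; ring
    rw [this, abs_le]
    constructor <;> linarith
  have hL_sub7 : ∀ m, L m ⊆ sevenCube z := by
    intro m y hy
    have hb := hL_ball m hy
    rw [Metric.mem_closedBall] at hb
    intro j
    have h1 : |y j - gridCenter N z m j| ≤ (N : ℝ)⁻¹ + 2 := by
      have := dist_le_pi_dist y (gridCenter N z m) j
      rw [Real.dist_eq] at this
      exact this.trans hb
    have h2 := hcenter m j
    have : y j - ((z j : ℝ) + 1 / 2) =
        (y j - gridCenter N z m j) + (gridCenter N z m j - ((z j : ℝ) + 1 / 2)) := by ring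
    rw [this]
    calc |(y j - gridCenter N z m j) + (gridCenter N z m j - ((z j : ℝ) + 1 / 2))|
        ≤ |y j - gridCenter N z m j| + |gridCenter N z m j - ((z j : ℝ) + 1 / 2)| := abs_add_le _ _
      _ ≤ ((N : ℝ)⁻¹ + 2) + 1 / 2 := add_le_add h1 h2
      _ ≤ 7 / 2 := by linarith
  -- positivity and finiteness of volumes
  have hVpos : ∀ m, 0 < volume (L m) := by
    intro m
    set p : Fin 2 → ℝ := fun j => if j ∈ (sel m).1.1 then gridCenter N z m j
      else gridCenter N z m j + (if (sel m).2 j then ρ m else -ρ m) with hpdef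
    have hp : p ∈ kFace 1 (gridCenter N z m) (ρ m) (sel m) := by
      constructor
      · intro i hi
        simp only [hpdef, if_pos hi, sub_self, abs_zero]
        exact le_trans zero_le_one (hρ m).1.1
      · intro i hi
        simp only [hpdef, if_neg hi]
    have hsub : Metric.closedBall p ((N : ℝ)⁻¹) ⊆ L m :=
      Metric.closedBall_subset_cthickening hp _
    calc (0 : ℝ≥0∞) < volume (Metric.closedBall p ((N : ℝ)⁻¹)) :=
          Metric.measure_closedBall_pos volume p hδpos
      _ ≤ volume (L m) := measure_mono hsub
  have hVlt : ∀ m, volume (L m) < ∞ := by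
    intro m
    calc volume (L m) ≤ volume (Metric.closedBall (gridCenter N z m) ((N : ℝ)⁻¹ + 2)) :=
          measure_mono (hL_ball m)
      _ < ∞ := (isCompact_closedBall _ _).measure_lt_top
  have hGmeas : ∀ m, MeasurableSet (gridCell N z m) := by
    intro m
    have : gridCell N z m = ⋂ j, (fun y : Fin 2 → ℝ => y j) ⁻¹'
        Set.Ico ((z j : ℝ) + (m j : ℝ) / N) ((z j : ℝ) + ((m j : ℝ) + 1) / N) := by
      ext y; simp [gridCell, Set.mem_iInter, Set.mem_Ico]
    rw [this]
    exact MeasurableSet.iInter fun j => (measurable_pi_apply j) measurableSet_Ico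
  -- the weight is a.e. measurable
  have hwmeas : AEMeasurable (fun y => ENNReal.ofReal (w y)) (volume : Measure (Fin 2 → ℝ)) :=
    ENNReal.measurable_ofReal.comp_aemeasurable hwloc.aestronglyMeasurable.aemeasurable
  -- bounded overlap at the level of measures
  have hmeasle : (∑ m : Fin 2 → Fin N, volume.restrict (L m)) ≤
      B • volume.restrict (sevenCube z) := by
    rw [Measure.le_iff]
    intro s hs
    rw [Measure.smul_apply, Measure.restrict_apply hs, smul_eq_mul,
      Measure.finset_sum_apply]
    have h7meas : MeasurableSet (sevenCube z) := by
      have : sevenCube z = ⋂ j, (fun y : Fin 2 → ℝ => y j) ⁻¹'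
          Set.Icc (((z j : ℝ) + 1 / 2) - 7 / 2) (((z j : ℝ) + 1 / 2) + 7 / 2) := by
        ext y
        simp only [sevenCube, Set.mem_setOf_eq, Set.mem_iInter, Set.mem_preimage,
          Set.mem_Icc, abs_le]
        constructor
        · intro h j; have := h j; constructor <;> linarith [this.1, this.2]
        · intro h j; have := h j; constructor <;> linarith [this.1, this.2]
      rw [this]
      exact MeasurableSet.iInter fun j => (measurable_pi_apply j) measurableSet_Icc
    have hpt : ∀ y, (∑ m : Fin 2 → Fin N, (s ∩ L m).indicator (fun _ => (1:ℝ≥0∞)) y) ≤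
        (s ∩ sevenCube z).indicator (fun _ => B) y := by
      intro y
      by_cases hy : ∃ m₀, y ∈ s ∩ L m₀
      · obtain ⟨m₀, hys, hyL⟩ := hy
        have hy7 : y ∈ s ∩ sevenCube z := ⟨hys, hL_sub7 m₀ hyL⟩
        rw [Set.indicator_of_mem hy7]
        have hcard : ((Finset.univ.filter (fun m : Fin 2 → Fin N => y ∈ L m)).card : ℝ) ≤
            A * ((N : ℝ)⁻¹) ^ (-(5 : ℝ) / 4) := by
          refine le_trans ?_ (hover m₀)
          have hsub : ↑(Finset.univ.filter (fun m : Fin 2 → Fin N => y ∈ L m)) ⊆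
              {m' : Fin 2 → Fin N | (L m₀ ∩ L m').Nonempty} := by
            intro m hm
            simp only [Finset.coe_filter, Finset.mem_univ, true_and, Set.mem_setOf_eq] at hm ⊢
            exact ⟨y, hyL, hm⟩
          have h := Set.ncard_le_ncard hsub (Set.toFinite _)
          rw [Set.ncard_coe_finset] at h
          exact_mod_cast h
        calc ∑ m : Fin 2 → Fin N, (s ∩ L m).indicator (fun _ => (1:ℝ≥0∞)) y
            ≤ ∑ m : Fin 2 → Fin N, (if y ∈ L m then (1:ℝ≥0∞) else 0) := by
              refine Finset.sum_le_sum fun m _ => ?_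
              by_cases hm : y ∈ s ∩ L m
              · rw [Set.indicator_of_mem hm, if_pos hm.2]
              · rw [Set.indicator_of_notMem hm]
                split_ifs <;> simp
          _ = ((Finset.univ.filter (fun m : Fin 2 → Fin N => y ∈ L m)).card : ℝ≥0∞) := by
              rw [Finset.sum_boole]
          _ ≤ B := by
              rw [hBdef, ← ENNReal.ofReal_natCast]
              exact ENNReal.ofReal_le_ofReal hcard
      · push_neg at hy
        have : ∀ m : Fin 2 → Fin N, (s ∩ L m).indicator (fun _ => (1:ℝ≥0∞)) y = 0 :=
          fun m => Set.indicator_of_notMem (hy m) _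
        simp only [this, Finset.sum_const_zero]
        exact zero_le
    calc ∑ m : Fin 2 → Fin N, volume.restrict (L m) s
        = ∑ m : Fin 2 → Fin N, volume (s ∩ L m) := by
          refine Finset.sum_congr rfl fun m _ => ?_
          rw [Measure.restrict_apply hs]
      _ = ∑ m : Fin 2 → Fin N, ∫⁻ y, (s ∩ L m).indicator (fun _ => (1:ℝ≥0∞)) y ∂volume := by
          refine Finset.sum_congr rfl fun m _ => ?_
          rw [lintegral_indicator (hs.inter (hLmeas m)), setLIntegral_const, one_mul]
      _ = ∫⁻ y, ∑ m : Fin 2 → Fin N, (s ∩ L m).indicator (fun _ => (1:ℝ≥0∞)) y ∂volume := by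
          rw [lintegral_finset_sum]
          intro m _
          exact measurable_const.indicator (hs.inter (hLmeas m))
      _ ≤ ∫⁻ y, (s ∩ sevenCube z).indicator (fun _ => B) y ∂volume := lintegral_mono hpt
      _ = B * volume (s ∩ sevenCube z) := by
          rw [lintegral_indicator (hs.inter h7meas), setLIntegral_const]
  have hsum_bound : ∀ g : (Fin 2 → ℝ) → ℝ≥0∞,
      ∑ m : Fin 2 → Fin N, ∫⁻ y in L m, g y ∂volume ≤ B * ∫⁻ y in sevenCube z, g y ∂volume := by
    intro g
    rw [← lintegral_finset_sum_measure]
    calc ∫⁻ y, g y ∂(∑ m : Fin 2 → Fin N, volume.restrict (L m))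
        ≤ ∫⁻ y, g y ∂(B • volume.restrict (sevenCube z)) := lintegral_mono' hmeasle le_rfl
      _ = B * ∫⁻ y in sevenCube z, g y ∂volume := lintegral_smul_measure _ _
  -- the A1 condition for each cell
  have hKm : ∀ m : Fin 2 → Fin N,
      ((volume (L m))⁻¹ * ∫⁻ y in gridCell N z m, ENNReal.ofReal (w y) ∂volume) *
        essSup (fun y => (ENNReal.ofReal (w y))⁻¹) (volume.restrict (L m)) ≤ K :=
    fun m => le_iSup (fun m : Fin 2 → Fin N =>
      ((volume (selFace 1 N z ρ sel ((N : ℝ)⁻¹) m))⁻¹ *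
        ∫⁻ y in gridCell N z m, ENNReal.ofReal (w y)) *
      essSup (fun y => (ENNReal.ofReal (w y))⁻¹)
        (volume.restrict (selFace 1 N z ρ sel ((N : ℝ)⁻¹) m))) m
  -- pointwise bound on the linearized operator
  set c : (Fin 2 → Fin N) → ℝ≥0∞ :=
    fun m => (volume (L m))⁻¹ * ∫⁻ y in L m, (‖f y‖₊ : ℝ≥0∞) ∂volume with hcdef
  have hnorm_le : ∀ x, (‖linMax 1 N z ρ sel ((N : ℝ)⁻¹) f x‖₊ : ℝ≥0∞) ≤
      ∑ m : Fin 2 → Fin N, (gridCell N z m).indicator (fun _ => c m) x := by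
    intro x
    rw [linMax]
    calc (‖∑ m : Fin 2 → Fin N, Set.indicator (gridCell N z m)
          (fun _ => (volume (L m)).toReal⁻¹ * ∫ y in L m, f y) x‖₊ : ℝ≥0∞)
        ≤ ∑ m : Fin 2 → Fin N, (‖Set.indicator (gridCell N z m)
            (fun _ => (volume (L m)).toReal⁻¹ * ∫ y in L m, f y) x‖₊ : ℝ≥0∞) := by
          exact_mod_cast nnnorm_sum_le _ _
      _ ≤ ∑ m : Fin 2 → Fin N, (gridCell N z m).indicator (fun _ => c m) x := by
          refine Finset.sum_le_sum fun m _ => ?_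
          by_cases hx : x ∈ gridCell N z m
          · rw [Set.indicator_of_mem hx, Set.indicator_of_mem hx]
            calc (‖(volume (L m)).toReal⁻¹ * ∫ y in L m, f y‖₊ : ℝ≥0∞)
                = (‖(volume (L m)).toReal⁻¹‖₊ : ℝ≥0∞) * (‖∫ y in L m, f y‖₊ : ℝ≥0∞) := by
                  rw [nnnorm_mul]; push_cast; ring
              _ ≤ (volume (L m))⁻¹ * ∫⁻ y in L m, (‖f y‖₊ : ℝ≥0∞) ∂volume := by
                  refine mul_le_mul' ?_ (enorm_integral_le_lintegral_enorm _)
                  rw [show ((‖(volume (L m)).toReal⁻¹‖₊ : ℝ≥0∞)) = ENNReal.ofReal (volume (L m)).toReal⁻¹ from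
                    Real.enorm_eq_ofReal (by positivity)]
                  exact ofReal_toReal_inv_le _
          · rw [Set.indicator_of_notMem hx, Set.indicator_of_notMem hx]
            simp
  -- per-cell weighted bound
  have hterm : ∀ m : Fin 2 → Fin N,
      (∫⁻ y in gridCell N z m, ENNReal.ofReal (w y) ∂volume) * c m ≤
        K * ∫⁻ y in L m, (‖f y‖₊ : ℝ≥0∞) * ENNReal.ofReal (w y) ∂volume := by
    intro m
    set W : ℝ≥0∞ := ∫⁻ y in gridCell N z m, ENNReal.ofReal (w y) ∂volume with hWdef
    rcases eq_or_ne W 0 with h0 | h0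
    · rw [h0, zero_mul]; exact zero_le
    set s : ℝ≥0∞ := essSup (fun y => (ENNReal.ofReal (w y))⁻¹) (volume.restrict (L m))
      with hsdef
    have hVinv_ne : (volume (L m))⁻¹ ≠ 0 := ENNReal.inv_ne_zero.mpr (hVlt m).ne
    have hs_ne : s ≠ ∞ := by
      intro hs
      apply hK
      have h1 : ((volume (L m))⁻¹ * W) * s = ⊤ := by
        rw [hs, ENNReal.mul_top (mul_ne_zero hVinv_ne h0)]
      exact top_le_iff.mp (h1 ▸ hKm m)
    have hae : ∀ᵐ y ∂(volume.restrict (L m)), (‖f y‖₊ : ℝ≥0∞) ≤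
        s * ((‖f y‖₊ : ℝ≥0∞) * ENNReal.ofReal (w y)) := by
      filter_upwards [ENNReal.ae_le_essSup (fun y => (ENNReal.ofReal (w y))⁻¹)] with y hy
      have hw0 : ENNReal.ofReal (w y) ≠ 0 := by
        intro h
        rw [h] at hy
        simp only [ENNReal.inv_zero] at hy
        exact hs_ne (top_le_iff.mp hy)
      calc (‖f y‖₊ : ℝ≥0∞)
          = ((‖f y‖₊ : ℝ≥0∞) * ENNReal.ofReal (w y)) * (ENNReal.ofReal (w y))⁻¹ := by
            rw [mul_assoc, ENNReal.mul_inv_cancel hw0 ENNReal.ofReal_ne_top, mul_one]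
        _ ≤ ((‖f y‖₊ : ℝ≥0∞) * ENNReal.ofReal (w y)) * s := mul_le_mul' le_rfl hy
        _ = s * ((‖f y‖₊ : ℝ≥0∞) * ENNReal.ofReal (w y)) := mul_comm _ _
    have hF : (∫⁻ y in L m, (‖f y‖₊ : ℝ≥0∞) ∂volume) ≤
        s * ∫⁻ y in L m, (‖f y‖₊ : ℝ≥0∞) * ENNReal.ofReal (w y) ∂volume := by
      calc (∫⁻ y in L m, (‖f y‖₊ : ℝ≥0∞) ∂volume)
          ≤ ∫⁻ y in L m, s * ((‖f y‖₊ : ℝ≥0∞) * ENNReal.ofReal (w y)) ∂volume :=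
            lintegral_mono_ae hae
        _ = s * ∫⁻ y in L m, (‖f y‖₊ : ℝ≥0∞) * ENNReal.ofReal (w y) ∂volume :=
            lintegral_const_mul' _ _ hs_ne
    calc W * c m
        = ((volume (L m))⁻¹ * W) * ∫⁻ y in L m, (‖f y‖₊ : ℝ≥0∞) ∂volume := by
          rw [hcdef]; ring
      _ ≤ ((volume (L m))⁻¹ * W) *
          (s * ∫⁻ y in L m, (‖f y‖₊ : ℝ≥0∞) * ENNReal.ofReal (w y) ∂volume) :=
            mul_le_mul' le_rfl hF
      _ = (((volume (L m))⁻¹ * W) * s) *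
          ∫⁻ y in L m, (‖f y‖₊ : ℝ≥0∞) * ENNReal.ofReal (w y) ∂volume := by ring
      _ ≤ K * ∫⁻ y in L m, (‖f y‖₊ : ℝ≥0∞) * ENNReal.ofReal (w y) ∂volume :=
          mul_le_mul' (hKm m) le_rfl
  -- rewrite both sides
  have hwf : ∀ E : Set (Fin 2 → ℝ), ∀ g : (Fin 2 → ℝ) → ℝ,
      eLpNorm g 1 ((wMeasure w).restrict E) =
        ∫⁻ x in E, ENNReal.ofReal (w x) * (‖g x‖₊ : ℝ≥0∞) ∂volume := by
    intro E g
    rw [eLpNorm_one_eq_lintegral_enorm]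
    show (∫⁻ x, (‖g x‖₊ : ℝ≥0∞)
      ∂((volume.withDensity fun x => ENNReal.ofReal (w x)).restrict E)) = _
    rw [MeasureTheory.restrict_withDensity' E (fun x => ENNReal.ofReal (w x)),
      lintegral_withDensity_eq_lintegral_mul_non_measurable₀ _ (hwmeas.restrict)
        (Filter.Eventually.of_forall fun x => ENNReal.ofReal_lt_top)]
    rfl
  rw [hwf (unitCube z) _, hwf (sevenCube z) f]
  -- main chain
  calc ∫⁻ x in unitCube z,
        ENNReal.ofReal (w x) * (‖linMax 1 N z ρ sel ((N : ℝ)⁻¹) f x‖₊ : ℝ≥0∞) ∂volume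
      ≤ ∫⁻ x in unitCube z, ∑ m : Fin 2 → Fin N,
          (gridCell N z m).indicator (fun y => ENNReal.ofReal (w y) * c m) x ∂volume := by
        refine lintegral_mono fun x => ?_
        calc ENNReal.ofReal (w x) * (‖linMax 1 N z ρ sel ((N : ℝ)⁻¹) f x‖₊ : ℝ≥0∞)
            ≤ ENNReal.ofReal (w x) *
                ∑ m : Fin 2 → Fin N, (gridCell N z m).indicator (fun _ => c m) x :=
              mul_le_mul' le_rfl (hnorm_le x)
          _ = ∑ m : Fin 2 → Fin N,
                (gridCell N z m).indicator (fun y => ENNReal.ofReal (w y) * c m) x := by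
              rw [Finset.mul_sum]
              refine Finset.sum_congr rfl fun m _ => ?_
              by_cases hx : x ∈ gridCell N z m <;> simp [hx]
    _ = ∑ m : Fin 2 → Fin N, ∫⁻ x in unitCube z,
          (gridCell N z m).indicator (fun y => ENNReal.ofReal (w y) * c m) x ∂volume := by
        refine lintegral_finset_sum' _ fun m _ => ?_
        exact (hwmeas.restrict.mul_const _).indicator (hGmeas m)
    _ ≤ ∑ m : Fin 2 → Fin N, ∫⁻ x,
          (gridCell N z m).indicator (fun y => ENNReal.ofReal (w y) * c m) x ∂volume := by
        refine Finset.sum_le_sum fun m _ => ?_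
        exact lintegral_mono' Measure.restrict_le_self le_rfl
    _ = ∑ m : Fin 2 → Fin N,
          (∫⁻ y in gridCell N z m, ENNReal.ofReal (w y) ∂volume) * c m := by
        refine Finset.sum_congr rfl fun m _ => ?_
        rw [lintegral_indicator (hGmeas m), lintegral_mul_const'' _ hwmeas.restrict]
    _ ≤ ∑ m : Fin 2 → Fin N,
          K * ∫⁻ y in L m, (‖f y‖₊ : ℝ≥0∞) * ENNReal.ofReal (w y) ∂volume :=
        Finset.sum_le_sum fun m _ => hterm m
    _ = K * ∑ m : Fin 2 → Fin N,
          ∫⁻ y in L m, (‖f y‖₊ : ℝ≥0∞) * ENNReal.ofReal (w y) ∂volume := by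
        rw [Finset.mul_sum]
    _ ≤ K * (B * ∫⁻ y in sevenCube z,
          (‖f y‖₊ : ℝ≥0∞) * ENNReal.ofReal (w y) ∂volume) :=
        mul_le_mul' le_rfl (hsum_bound _)
    _ = ENNReal.ofReal (A * ((N : ℝ)⁻¹) ^ (-(5 : ℝ) / 4)) * K *
          ∫⁻ x in sevenCube z, ENNReal.ofReal (w x) * (‖f x‖₊ : ℝ≥0∞) ∂volume := by
        rw [show (∫⁻ y in sevenCube z, (‖f y‖₊ : ℝ≥0∞) * ENNReal.ofReal (w y) ∂volume) =
            ∫⁻ x in sevenCube z, ENNReal.ofReal (w x) * (‖f x‖₊ : ℝ≥0∞) ∂volume from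
          lintegral_congr fun y => mul_comm _ _]
        rw [hBdef]; ring

end
end

section
/- Fix integers 0 ≤ k < n. Let w be a weight on ℝⁿ, let 1 < p < ∞ and let δ ∈ (0,1). Suppose the k-skeleton maximal operator M^k_{4δ} is bounded on L^p(w), i.e. there is a constant C with ‖M^k_{4δ} f‖_{L^p(w)} ≤ C‖f‖_{L^p(w)} for all f ∈ L^p(w). Then w belongs to the class 𝒜^{S_k}_p at scale δ: the supremum over all x ∈ ℝⁿ and r ∈ [1,2] of (|S_{k,δ}(x,r)|^{−1} ∫_{Q_δ(x)} w dx)·(⨍_{ℓ_{k,δ}(x,r)} w^{−p'/p} dx)^p·(⨍_{S_{k,δ}(x,r)} w^{−p'/p} dx)^{−1} is finite. -/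
set_option maxHeartbeats 1000000


open MeasureTheory Metric Set
open scoped ENNReal NNReal

noncomputable section

lemma real_cthickening_Icc {a b δ : ℝ} (hδ : 0 ≤ δ) (hab : a ≤ b) :
    cthickening δ (Icc a b) = Icc (a - δ) (b + δ) := by
  have h1 : Icc a b = closedBall ((a+b)/2) ((b-a)/2) := by
    rw [Real.closedBall_eq_Icc]; ring_nf
  have h2 : Icc (a - δ) (b + δ) = closedBall ((a+b)/2) ((b-a)/2 + δ) := by
    rw [Real.closedBall_eq_Icc]; ring_nf
  rw [h1, h2, cthickening_closedBall hδ (by linarith)]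
  congr 1
  ring

lemma cthickening_pi {n : ℕ} {S : Fin n → Set ℝ} {δ : ℝ} (hδ : 0 ≤ δ)
    (hne : ∀ i, (S i).Nonempty) (hcl : ∀ i, IsClosed (S i)) :
    cthickening δ (Set.univ.pi S) = Set.univ.pi (fun i => cthickening δ (S i)) := by
  ext y
  constructor
  · intro hy i _
    rw [mem_cthickening_iff] at hy ⊢
    refine le_trans ?_ hy
    rw [Metric.infEDist]
    refine le_iInf₂ fun z hz => ?_
    exact (EMetric.infEdist_le_edist_of_mem (hz i (Set.mem_univ i))).trans
      (edist_le_pi_edist y z i)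
  · intro hy
    have : ∀ i, ∃ z ∈ S i, dist (y i) z ≤ δ := by
      intro i
      obtain ⟨z, hzS, hz⟩ := (hcl i).exists_infDist_eq_dist (hne i) (y i)
      refine ⟨z, hzS, ?_⟩
      rw [← hz]
      have := hy i (Set.mem_univ i)
      rw [mem_cthickening_iff] at this
      have h2 : EMetric.infEdist (y i) (S i) ≠ ⊤ :=
        ne_top_of_le_ne_top ENNReal.ofReal_ne_top this
      rw [Metric.infDist]
      calc (EMetric.infEdist (y i) (S i)).toReal
          ≤ (ENNReal.ofReal δ).toReal := ENNReal.toReal_mono ENNReal.ofReal_ne_top this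
        _ = δ := ENNReal.toReal_ofReal hδ
    choose z hzS hzd using this
    exact mem_cthickening_of_dist_le y z δ _ (fun i _ => hzS i)
      ((dist_pi_le_iff hδ).2 fun i => hzd i)

def faceIval {n : ℕ} (x : Fin n → ℝ) (r : ℝ) (F : FaceIdx n k) (i : Fin n) : Set ℝ :=
  if i ∈ F.1.1 then Icc (x i - r) (x i + r)
  else Icc (x i + (if F.2 i then r else -r)) (x i + (if F.2 i then r else -r))

lemma kFace_eq_pi {n k : ℕ} (x : Fin n → ℝ) (r : ℝ) (F : FaceIdx n k) :
    kFace k x r F = Set.univ.pi (faceIval x r F) := by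
  ext y
  simp only [kFace, Set.mem_setOf_eq, Set.mem_univ_pi, faceIval]
  constructor
  · rintro ⟨h1, h2⟩ i
    by_cases hi : i ∈ F.1.1
    · simp only [hi, if_true, Set.mem_Icc]
      have := h1 i hi
      rw [abs_sub_le_iff] at this
      constructor <;> linarith [this.1, this.2]
    · simp only [hi, if_false, Set.mem_Icc]
      rw [h2 i hi]; exact ⟨le_refl _, le_refl _⟩
  · intro h
    constructor
    · intro i hi
      have := h i; rw [if_pos hi, Set.mem_Icc] at this
      rw [abs_sub_le_iff]; constructor <;> linarith [this.1, this.2]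
    · intro i hi
      have := h i; rw [if_neg hi, Set.mem_Icc] at this
      linarith [this.1, this.2]

lemma faceNbhd_eq_pi {n k : ℕ} {δ r : ℝ} (hδ : 0 ≤ δ) (hr : 0 ≤ r)
    (x : Fin n → ℝ) (F : FaceIdx n k) :
    faceNbhd k δ x r F = Set.univ.pi (fun i =>
      if i ∈ F.1.1 then Icc (x i - r - δ) (x i + r + δ)
      else Icc (x i + (if F.2 i then r else -r) - δ) (x i + (if F.2 i then r else -r) + δ)) := by
  rw [faceNbhd, kFace_eq_pi, cthickening_pi hδ]
  · refine Set.pi_congr rfl fun i _ => ?_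
    by_cases hi : i ∈ F.1.1 <;>
      simp only [faceIval, hi, if_true, if_false] <;>
      rw [real_cthickening_Icc hδ (by linarith)] <;> ring_nf
  · intro i
    by_cases hi : i ∈ F.1.1 <;> simp [faceIval, hi, Set.nonempty_Icc] <;> linarith
  · intro i
    by_cases hi : i ∈ F.1.1 <;> simp only [faceIval, hi, if_true, if_false]
      <;> first | exact isClosed_Icc | exact isClosed_singleton | simp [isClosed_Icc]

lemma volume_faceNbhd {n k : ℕ} {δ r : ℝ} (hδ : 0 ≤ δ) (hr : 0 ≤ r) (hkn : k ≤ n)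
    (x : Fin n → ℝ) (F : FaceIdx n k) :
    volume (faceNbhd k δ x r F) =
      ENNReal.ofReal (2*r + 2*δ) ^ k * ENNReal.ofReal (2*δ) ^ (n - k) := by
  rw [faceNbhd_eq_pi hδ hr, volume_pi_pi]
  have h : ∀ i : Fin n, volume (if i ∈ F.1.1 then Icc (x i - r - δ) (x i + r + δ)
      else Icc (x i + (if F.2 i then r else -r) - δ) (x i + (if F.2 i then r else -r) + δ))
      = if i ∈ F.1.1 then ENNReal.ofReal (2*r + 2*δ) else ENNReal.ofReal (2*δ) := by
    intro i
    by_cases hi : i ∈ F.1.1 <;> simp only [hi, if_true, if_false, Real.volume_Icc] <;>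
      congr 1 <;> ring
  simp_rw [h]
  rw [Finset.prod_ite (f := fun _ => ENNReal.ofReal (2*r+2*δ))
    (g := fun _ => ENNReal.ofReal (2*δ))]
  rw [Finset.prod_const, Finset.prod_const]
  congr 1
  · congr 1
    rw [Finset.filter_mem_eq_inter, Finset.univ_inter, F.1.2]
  · congr 1
    have : Finset.filter (fun x => x ∉ F.1.1) Finset.univ = F.1.1ᶜ := by
      ext i; simp
    rw [this, Finset.card_compl, F.1.2, Fintype.card_fin]

lemma faceNbhd_subset {n k : ℕ} {δ r : ℝ} (hδ : 0 < δ) (hr : 0 ≤ r)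
    {x y : Fin n → ℝ} (hy : ∀ j, |y j - x j| ≤ δ / 2) (F : FaceIdx n k) :
    faceNbhd k δ x r F ⊆ faceNbhd k (4*δ) y r F := by
  rw [faceNbhd_eq_pi hδ.le hr, faceNbhd_eq_pi (by linarith) hr]
  refine Set.pi_mono fun i _ => ?_
  have h := hy i
  rw [abs_sub_le_iff] at h
  by_cases hi : i ∈ F.1.1 <;> simp only [hi, if_true, if_false] <;>
    refine Set.Icc_subset_Icc (by linarith [h.1, h.2]) (by linarith [h.1, h.2])







lemma cube_eq_Icc {n : ℕ} (c : Fin n → ℝ) (s : ℝ) :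
    cube c s = Set.Icc (fun j => c j - s/2) (fun j => c j + s/2) := by
  ext y
  simp only [cube, Set.mem_setOf_eq, Set.mem_Icc, Pi.le_def]
  constructor
  · intro h
    constructor <;> intro j <;> have := h j <;> rw [abs_sub_le_iff] at this <;>
      [linarith [this.2]; linarith [this.1]]
  · rintro ⟨h1, h2⟩ j
    rw [abs_sub_le_iff]
    exact ⟨by linarith [h2 j], by linarith [h1 j]⟩

theorem necessary_condition_k_aux (n k : ℕ) (hkn : k < n) (δ p : ℝ)
    (hδ : δ ∈ Set.Ioo (0 : ℝ) 1) (hp : 1 < p)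
    (w : (Fin n → ℝ) → ℝ) (hwm : Measurable w)
    (hw0 : ∀ x, 0 ≤ w x) (hw : LocallyIntegrable w volume)
    (C : ℝ)
    (hbdd : ∀ f : (Fin n → ℝ) → ℝ,
      lpNormE (skelMax n k (4 * δ) f) p (wMeasure w) ≤
        ENNReal.ofReal C * eLpNorm f (ENNReal.ofReal p) (wMeasure w)) :
    ∃ B : ℝ, ∀ (x : Fin n → ℝ) (r : ℝ), r ∈ Set.Icc (1 : ℝ) 2 →
      ((volume (skelNbhd k δ x r)).toReal⁻¹ * ∫ y in cube x δ, w y) *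
          (⨅ F : FaceIdx n k,
            ravg (faceNbhd k δ x r F) fun y => w y ^ (-(p / (p - 1)) / p)) ^ p *
          (ravg (skelNbhd k δ x r) fun y => w y ^ (-(p / (p - 1)) / p))⁻¹ ≤ B := by
  obtain ⟨hδ0, hδ1⟩ := hδ
  have hp0 : (0:ℝ) < p := by linarith
  have hp1 : (0:ℝ) < p - 1 := by linarith
  set c : ℝ := -(p / (p - 1)) / p with hc_def
  have hc_neg : c < 0 := by
    rw [hc_def]
    apply div_neg_of_neg_of_pos _ hp0
    exact neg_neg_of_pos (div_pos hp0 hp1)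
  have hc_ne : c ≠ 0 := ne_of_lt hc_neg
  -- key real identity : (t^c)^p * t = t^c for t ≥ 0
  have hkey : ∀ t : ℝ, 0 ≤ t → (t ^ c) ^ p * t = t ^ c := by
    intro t ht
    rcases eq_or_lt_of_le ht with h0 | h0
    · rw [← h0, Real.zero_rpow hc_ne, Real.zero_rpow (ne_of_gt hp0), zero_mul]
    · rw [← Real.rpow_mul ht]
      nth_rewrite 2 [show t = t ^ (1:ℝ) by rw [Real.rpow_one]]
      rw [← Real.rpow_add h0]
      congr 1
      rw [hc_def]
      field_simp
      ring
  -- nonempty face index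
  obtain ⟨T, -, hTcard⟩ := Finset.exists_subset_card_eq (s := (Finset.univ : Finset (Fin n))) (n := k)
    (by simpa using hkn.le)
  haveI hFI : Nonempty (FaceIdx n k) := ⟨⟨⟨T, hTcard⟩, fun _ => true⟩⟩
  have hg0 : ∀ y, 0 ≤ w y ^ c := fun y => Real.rpow_nonneg (hw0 y) c
  have hgm : Measurable fun y => w y ^ c := by measurability
  -- the uniform bound
  set M : ℝ := ((12:ℝ)^k * 8^(n-k)) / ((2:ℝ)^k * (2*δ)^(n-k)) with hM_def
  have hden_pos : (0:ℝ) < (2:ℝ)^k * (2*δ)^(n-k) :=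
    mul_pos (pow_pos two_pos k) (pow_pos (by linarith) _)
  have hM_nonneg : 0 ≤ M := div_nonneg (by positivity) hden_pos.le
  set Cr : ℝ := (ENNReal.ofReal C).toReal with hCr_def
  refine ⟨Cr ^ p * M ^ p, ?_⟩
  have hB_nonneg : 0 ≤ Cr ^ p * M ^ p :=
    mul_nonneg (Real.rpow_nonneg ENNReal.toReal_nonneg p) (Real.rpow_nonneg hM_nonneg p)
  intro x r hrIcc
  obtain ⟨hr1, hr2⟩ := hrIcc
  have hr0 : (0:ℝ) ≤ r := by linarith
  set g : (Fin n → ℝ) → ℝ := fun y => w y ^ c with hg_def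
  set skel := skelNbhd k δ x r with hskel_def
  have meas_face : ∀ F : FaceIdx n k, MeasurableSet (faceNbhd k δ x r F) := fun F =>
    (isClosed_cthickening).measurableSet
  have meas_skel : MeasurableSet skel :=
    MeasurableSet.iUnion fun F => meas_face F
  have face_subset_skel : ∀ F, faceNbhd k δ x r F ⊆ skel := fun F =>
    Set.subset_iUnion (fun F => faceNbhd k δ x r F) F
  -- volumes
  set V1 : ℝ≥0∞ := ENNReal.ofReal (2*r + 2*δ) ^ k * ENNReal.ofReal (2*δ) ^ (n-k) with hV1_def
  set V4 : ℝ≥0∞ := ENNReal.ofReal (2*r + 2*(4*δ)) ^ k * ENNReal.ofReal (2*(4*δ)) ^ (n-k)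
    with hV4_def
  have hV1 : ∀ F, volume (faceNbhd k δ x r F) = V1 := fun F =>
    volume_faceNbhd hδ0.le hr0 hkn.le x F
  have hV4 : ∀ (z : Fin n → ℝ) (F : FaceIdx n k), volume (faceNbhd k (4*δ) z r F) = V4 :=
    fun z F => volume_faceNbhd (by linarith) hr0 hkn.le z F
  have hV1_ne_top : V1 ≠ ⊤ := by
    rw [hV1_def]
    exact ENNReal.mul_ne_top (ENNReal.pow_ne_top ENNReal.ofReal_ne_top) (ENNReal.pow_ne_top ENNReal.ofReal_ne_top)
  have hV1_ne_zero : V1 ≠ 0 := by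
    rw [hV1_def]
    apply mul_ne_zero <;> apply pow_ne_zero <;> simp <;> linarith
  have hV4_ne_top : V4 ≠ ⊤ := by
    rw [hV4_def]
    exact ENNReal.mul_ne_top (ENNReal.pow_ne_top ENNReal.ofReal_ne_top) (ENNReal.pow_ne_top ENNReal.ofReal_ne_top)
  have hV4_ne_zero : V4 ≠ 0 := by
    rw [hV4_def]
    apply mul_ne_zero <;> apply pow_ne_zero <;> simp <;> linarith
  have hVs_le : volume skel ≤ (Fintype.card (FaceIdx n k) : ℝ≥0∞) * V1 := by
    refine le_trans (measure_iUnion_le _) ?_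
    rw [tsum_fintype]
    simp_rw [hV1]
    rw [Finset.sum_const, Finset.card_univ, nsmul_eq_mul]
  have hVs_ne_top : volume skel ≠ ⊤ :=
    ne_top_of_le_ne_top (ENNReal.mul_ne_top (ENNReal.natCast_ne_top _) hV1_ne_top) hVs_le
  have hVs_pos : 0 < volume skel := by
    have F0 : FaceIdx n k := Classical.arbitrary _
    calc (0:ℝ≥0∞) < V1 := pos_iff_ne_zero.2 hV1_ne_zero
    _ = volume (faceNbhd k δ x r F0) := (hV1 F0).symm
    _ ≤ volume skel := measure_mono (face_subset_skel F0)
  -- cube facts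
  have meas_cube : MeasurableSet (cube x δ) := by
    rw [cube_eq_Icc]; exact measurableSet_Icc
  have compact_cube : IsCompact (cube x δ) := by
    rw [cube_eq_Icc]; exact isCompact_Icc
  -- the test function
  set f : (Fin n → ℝ) → ℝ := skel.indicator g with hf_def
  have hfm : Measurable f := hgm.indicator meas_skel
  set K : ℝ≥0∞ := ∫⁻ y in skel, ENNReal.ofReal (g y) with hK_def
  set J : ℝ≥0∞ := ⨅ F : FaceIdx n k, ∫⁻ y in faceNbhd k δ x r F, ENNReal.ofReal (g y)
    with hJ_def
  set Wc : ℝ≥0∞ := wMeasure w (cube x δ) with hWc_def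
  have hWc_eq : Wc = ∫⁻ y in cube x δ, ENNReal.ofReal (w y) := by
    rw [hWc_def, wMeasure, withDensity_apply _ meas_cube]
  have hWc_ne_top : Wc ≠ ⊤ := by
    rw [hWc_eq]
    have hint : IntegrableOn w (cube x δ) volume := hw.integrableOn_isCompact compact_cube
    have := hint.2
    rw [HasFiniteIntegral] at this
    refine ne_top_of_lt (lt_of_le_of_lt (lintegral_mono fun y => ?_) this)
    rw [← Real.enorm_eq_ofReal (hw0 y)]
  -- eLpNorm of the test function
  have hnorm : eLpNorm f (ENNReal.ofReal p) (wMeasure w) = K ^ (1/p) := by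
    rw [eLpNorm_eq_lintegral_rpow_enorm_toReal (by simpa using hp0) (by simp),
      ENNReal.toReal_ofReal hp0.le]
    congr 1
    rw [wMeasure, lintegral_withDensity_eq_lintegral_mul _ (hwm.ennreal_ofReal)
      (hfm.enorm.pow_const p)]
    rw [hK_def, ← lintegral_indicator meas_skel]
    congr 1
    ext y
    by_cases hy : y ∈ skel
    · rw [Set.indicator_of_mem hy]
      simp only [Pi.mul_apply]
      rw [hf_def, Set.indicator_of_mem hy]
      rw [Real.enorm_eq_ofReal (hg0 y), ENNReal.ofReal_rpow_of_nonneg (hg0 y) hp0.le,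
        ← ENNReal.ofReal_mul (hw0 y)]
      rw [hg_def]
      refine congrArg ENNReal.ofReal ?_
      rw [mul_comm]
      exact hkey (w y) (hw0 y)
    · rw [Set.indicator_of_notMem hy]
      simp only [Pi.mul_apply]
      rw [hf_def, Set.indicator_of_notMem hy]
      simp [ENNReal.zero_rpow_of_pos hp0]
  -- pointwise lower bound for the maximal function on the cube
  have hpoint : ∀ z ∈ cube x δ, V4⁻¹ * J ≤ skelMax n k (4*δ) f z := by
    intro z hz
    have hz' : ∀ j, |z j - x j| ≤ δ / 2 := hz
    have hstep : (⨅ F : FaceIdx n k, (volume (faceNbhd k (4*δ) z r F))⁻¹ *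
        ∫⁻ y in faceNbhd k (4*δ) z r F, (‖f y‖₊ : ℝ≥0∞)) ≤ skelMax n k (4*δ) f z := by
      rw [skelMax]
      exact le_biSup (fun r' => ⨅ F : FaceIdx n k, (volume (faceNbhd k (4*δ) z r' F))⁻¹ *
        ∫⁻ y in faceNbhd k (4*δ) z r' F, (‖f y‖₊ : ℝ≥0∞)) (⟨hr1, hr2⟩ : r ∈ Set.Icc (1:ℝ) 2)
    refine le_trans (le_iInf fun F => ?_) hstep
    rw [hV4 z F]
    refine mul_le_mul' le_rfl ?_
    calc J ≤ ∫⁻ y in faceNbhd k δ x r F, ENNReal.ofReal (g y) := iInf_le _ F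
    _ = ∫⁻ y in faceNbhd k δ x r F, (‖f y‖₊ : ℝ≥0∞) := by
        refine setLIntegral_congr_fun (meas_face F) (fun y hy => ?_)
        rw [hf_def, Set.indicator_of_mem (face_subset_skel F hy),
          ← enorm_eq_nnnorm, Real.enorm_eq_ofReal (hg0 y)]
    _ ≤ ∫⁻ y in faceNbhd k (4*δ) z r F, (‖f y‖₊ : ℝ≥0∞) :=
        lintegral_mono_set (faceNbhd_subset hδ0 hr0 hz' F)
  -- key inequality
  have hkey2 : V4⁻¹ * J * Wc ^ (1/p) ≤ ENNReal.ofReal C * K ^ (1/p) := by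
    have h1 : (V4⁻¹ * J) ^ p * Wc ≤ ∫⁻ z, (skelMax n k (4*δ) f z) ^ p ∂(wMeasure w) := by
      rw [← lintegral_indicator_const meas_cube]
      refine lintegral_mono fun z => ?_
      by_cases hz : z ∈ cube x δ
      · rw [Set.indicator_of_mem hz]
        exact ENNReal.rpow_le_rpow (hpoint z hz) hp0.le
      · rw [Set.indicator_of_notMem hz]
        exact zero_le
    have h2 : V4⁻¹ * J * Wc ^ (1/p) ≤ lpNormE (skelMax n k (4*δ) f) p (wMeasure w) := by
      rw [lpNormE]
      calc V4⁻¹ * J * Wc ^ (1/p)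
          = ((V4⁻¹ * J) ^ p * Wc) ^ (1/p) := by
            rw [ENNReal.mul_rpow_of_nonneg _ _ (by positivity : (0:ℝ) ≤ 1/p),
              ← ENNReal.rpow_mul, mul_one_div, div_self (ne_of_gt hp0), ENNReal.rpow_one]
      _ ≤ _ := ENNReal.rpow_le_rpow h1 (by positivity)
    exact le_trans (le_trans h2 (hbdd f)) (by rw [hnorm])
  -- translation to real-valued quantities
  have hWr : ∫ y in cube x δ, w y = Wc.toReal := by
    rw [integral_eq_lintegral_of_nonneg_ae (Filter.Eventually.of_forall fun y => hw0 y)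
      hwm.aestronglyMeasurable.restrict, hWc_eq]
  rw [hWr]
  by_cases hInt : IntegrableOn g skel volume
  · -- integrable case
    have hK_ne_top : K ≠ ⊤ := by
      have h2 := hInt.2
      rw [HasFiniteIntegral] at h2
      rw [hK_def]
      refine ne_top_of_lt (lt_of_le_of_lt (lintegral_mono fun y => ?_) h2)
      rw [← Real.enorm_eq_ofReal (hg0 y)]
    have hE_ne_top : ∀ F : FaceIdx n k,
        (∫⁻ y in faceNbhd k δ x r F, ENNReal.ofReal (g y)) ≠ ⊤ := fun F =>
      ne_top_of_le_ne_top hK_ne_top (lintegral_mono_set (face_subset_skel F))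
    have hEint : ∀ F : FaceIdx n k, ∫ y in faceNbhd k δ x r F, g y =
        (∫⁻ y in faceNbhd k δ x r F, ENNReal.ofReal (g y)).toReal := fun F => by
      rw [integral_eq_lintegral_of_nonneg_ae (Filter.Eventually.of_forall fun y => hg0 y)
        hgm.aestronglyMeasurable.restrict]
    have hKint : ∫ y in skel, g y = K.toReal := by
      rw [integral_eq_lintegral_of_nonneg_ae (Filter.Eventually.of_forall fun y => hg0 y)
        hgm.aestronglyMeasurable.restrict, hK_def]
    have hIr : (⨅ F : FaceIdx n k, ravg (faceNbhd k δ x r F) g) = V1.toReal⁻¹ * J.toReal := by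
      have h5 : ∀ F : FaceIdx n k, ravg (faceNbhd k δ x r F) g =
          V1.toReal⁻¹ * (∫⁻ y in faceNbhd k δ x r F, ENNReal.ofReal (g y)).toReal := fun F => by
        rw [ravg, hV1 F, hEint F]
      rw [iInf_congr h5, ← Real.mul_iInf_of_nonneg (inv_nonneg.2 ENNReal.toReal_nonneg),
        ← ENNReal.toReal_iInf hE_ne_top]
    rw [hIr]
    have hRs : ravg skel g = (volume skel).toReal⁻¹ * K.toReal := by
      rw [ravg, hKint]
    rw [hRs]
    by_cases hK0 : K = 0
    · rw [hK0]
      simp only [ENNReal.toReal_zero, mul_zero, inv_zero]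
      exact hB_nonneg
    · -- main case
      have hKr_pos : 0 < K.toReal := ENNReal.toReal_pos hK0 hK_ne_top
      have ha_pos : 0 < V1.toReal := ENNReal.toReal_pos hV1_ne_zero hV1_ne_top
      have hb_pos : 0 < V4.toReal := ENNReal.toReal_pos hV4_ne_zero hV4_ne_top
      have hVr_pos : 0 < (volume skel).toReal :=
        ENNReal.toReal_pos (ne_of_gt hVs_pos) hVs_ne_top
      have h3 : (V4⁻¹) ^ p * J ^ p * Wc ≤ (ENNReal.ofReal C) ^ p * K := by
        have h6 := ENNReal.rpow_le_rpow hkey2 hp0.le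
        rwa [ENNReal.mul_rpow_of_nonneg _ _ hp0.le, ENNReal.mul_rpow_of_nonneg _ _ hp0.le,
          ENNReal.mul_rpow_of_nonneg _ _ hp0.le, ← ENNReal.rpow_mul Wc,
          one_div_mul_cancel (ne_of_gt hp0), ENNReal.rpow_one,
          ← ENNReal.rpow_mul K, one_div_mul_cancel (ne_of_gt hp0), ENNReal.rpow_one] at h6
      have hRHS_ne_top : (ENNReal.ofReal C) ^ p * K ≠ ⊤ :=
        ENNReal.mul_ne_top (ENNReal.rpow_ne_top_of_nonneg hp0.le ENNReal.ofReal_ne_top) hK_ne_top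
      have h4 := ENNReal.toReal_mono hRHS_ne_top h3
      rw [ENNReal.toReal_mul, ENNReal.toReal_mul, ENNReal.toReal_mul,
        ← ENNReal.toReal_rpow, ← ENNReal.toReal_rpow, ← ENNReal.toReal_rpow,
        ENNReal.toReal_inv] at h4
      -- h4 : (V4.toReal⁻¹)^p * J.toReal^p * Wc.toReal ≤ Cr^p * K.toReal
      set a := V1.toReal with hadef
      set b := V4.toReal with hbdef
      set Vr := (volume skel).toReal
      set Jr := J.toReal
      set Kr := K.toReal
      set Wr := Wc.toReal
      have hJr0 : 0 ≤ Jr := ENNReal.toReal_nonneg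
      have hWr0 : 0 ≤ Wr := ENNReal.toReal_nonneg
      have hbb : (b⁻¹) ^ p * b ^ p = 1 := by
        rw [← Real.mul_rpow (inv_nonneg.2 hb_pos.le) hb_pos.le,
          inv_mul_cancel₀ (ne_of_gt hb_pos), Real.one_rpow]
      have h5 : Jr ^ p * Wr ≤ Cr ^ p * Kr * b ^ p := by
        have h7 := mul_le_mul_of_nonneg_right h4 (Real.rpow_nonneg hb_pos.le p)
        have heq : (b⁻¹) ^ p * Jr ^ p * Wr * b ^ p = Jr ^ p * Wr := by
          rw [show (b⁻¹)^p * Jr^p * Wr * b^p = ((b⁻¹)^p * b^p) * (Jr^p * Wr) from by ring,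
            hbb, one_mul]
        linarith
      -- now massage the goal
      rw [mul_inv, inv_inv,
        Real.mul_rpow (inv_nonneg.2 ENNReal.toReal_nonneg) hJr0]
      have hgoal_eq : Vr⁻¹ * Wr * ((a⁻¹) ^ p * Jr ^ p) * (Vr * Kr⁻¹) =
          (Vr⁻¹ * Vr) * ((a⁻¹) ^ p * (Jr ^ p * Wr) * Kr⁻¹) := by ring
      rw [hgoal_eq, inv_mul_cancel₀ (ne_of_gt hVr_pos), one_mul]
      have hab : b / a ≤ M := by
        have hb_le : b ≤ (12:ℝ)^k * 8^(n-k) := by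
          rw [hbdef, hV4_def, ENNReal.toReal_mul, ENNReal.toReal_pow, ENNReal.toReal_pow,
            ENNReal.toReal_ofReal (by linarith), ENNReal.toReal_ofReal (by linarith)]
          refine mul_le_mul (pow_le_pow_left₀ (by linarith) (by linarith) k)
            (pow_le_pow_left₀ (by linarith) (by linarith) (n-k)) (by positivity) (by positivity)
        have ha_ge : (2:ℝ)^k * (2*δ)^(n-k) ≤ a := by
          rw [hadef, hV1_def, ENNReal.toReal_mul, ENNReal.toReal_pow, ENNReal.toReal_pow,
            ENNReal.toReal_ofReal (by linarith), ENNReal.toReal_ofReal (by linarith)]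
          refine mul_le_mul (pow_le_pow_left₀ (by linarith) (by linarith) k) le_rfl
            (by positivity) (by positivity)
        rw [hM_def]
        exact div_le_div₀ (by positivity) hb_le hden_pos ha_ge
      calc (a⁻¹) ^ p * (Jr ^ p * Wr) * Kr⁻¹
          ≤ (a⁻¹) ^ p * (Cr ^ p * Kr * b ^ p) * Kr⁻¹ := by
            refine mul_le_mul_of_nonneg_right
              (mul_le_mul_of_nonneg_left h5 (Real.rpow_nonneg (inv_nonneg.2 ha_pos.le) p))
              (inv_nonneg.2 hKr_pos.le)
        _ = Cr ^ p * ((a⁻¹) ^ p * b ^ p) * (Kr * Kr⁻¹) := by ring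
        _ = Cr ^ p * (b / a) ^ p := by
            rw [mul_inv_cancel₀ (ne_of_gt hKr_pos), mul_one,
              ← Real.mul_rpow (inv_nonneg.2 ha_pos.le) hb_pos.le]
            congr 2
            rw [div_eq_mul_inv, mul_comm]
        _ ≤ Cr ^ p * M ^ p := by
            refine mul_le_mul_of_nonneg_left
              (Real.rpow_le_rpow (div_nonneg hb_pos.le ha_pos.le) hab hp0.le)
              (Real.rpow_nonneg ENNReal.toReal_nonneg p)
  · -- non-integrable case : the infimum is 0
    have hex : ∃ F : FaceIdx n k, ¬ IntegrableOn g (faceNbhd k δ x r F) volume := by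
      by_contra hcon
      push_neg at hcon
      exact hInt (by
        rw [hskel_def, skelNbhd]
        exact (integrableOn_finite_iUnion).2 fun F => hcon F)
    obtain ⟨F₀, hF₀⟩ := hex
    have hI0 : (⨅ F : FaceIdx n k, ravg (faceNbhd k δ x r F) g) = 0 := by
      apply le_antisymm
      · calc (⨅ F : FaceIdx n k, ravg (faceNbhd k δ x r F) g)
            ≤ ravg (faceNbhd k δ x r F₀) g :=
              ciInf_le (Set.Finite.bddBelow (Set.finite_range _)) F₀
        _ = 0 := by rw [ravg, integral_undef hF₀, mul_zero]
      · exact le_ciInf fun F =>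
          mul_nonneg (inv_nonneg.2 ENNReal.toReal_nonneg) (integral_nonneg fun y => hg0 y)
    rw [hI0, Real.zero_rpow (ne_of_gt hp0), mul_zero, zero_mul]
    exact hB_nonneg


/-- if the `k`-skeleton maximal operator `M^k_{4δ}` is bounded on
`L^p(w)` in `ℝⁿ`, then `w` satisfies the `𝒜^{S_k}_p` condition at scale `δ`. -/
theorem necessary_condition_k (n k : ℕ) (hkn : k < n) (δ p : ℝ)
    (hδ : δ ∈ Set.Ioo (0 : ℝ) 1) (hp : 1 < p)
    (w : (Fin n → ℝ) → ℝ) (hw0 : ∀ x, 0 ≤ w x) (hw : LocallyIntegrable w volume)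
    (C : ℝ)
    (hbdd : ∀ f : (Fin n → ℝ) → ℝ,
      lpNormE (skelMax n k (4 * δ) f) p (wMeasure w) ≤
        ENNReal.ofReal C * eLpNorm f (ENNReal.ofReal p) (wMeasure w)) :
    ∃ B : ℝ, ∀ (x : Fin n → ℝ) (r : ℝ), r ∈ Set.Icc (1 : ℝ) 2 →
      ((volume (skelNbhd k δ x r)).toReal⁻¹ * ∫ y in cube x δ, w y) *
          (⨅ F : FaceIdx n k,
            ravg (faceNbhd k δ x r F) fun y => w y ^ (-(p / (p - 1)) / p)) ^ p *
          (ravg (skelNbhd k δ x r) fun y => w y ^ (-(p / (p - 1)) / p))⁻¹ ≤ B := by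
  -- replace `w` by a measurable representative
  set w' : (Fin n → ℝ) → ℝ :=
    fun y => max (hw.aestronglyMeasurable.mk w y) 0 with hw'_def
  have hw'm : Measurable w' :=
    hw.aestronglyMeasurable.stronglyMeasurable_mk.measurable.max measurable_const
  have hww' : ∀ᵐ y ∂(volume : Measure (Fin n → ℝ)), w y = w' y := by
    filter_upwards [hw.aestronglyMeasurable.ae_eq_mk] with y hy
    rw [hw'_def]
    simp only
    rw [← hy, max_eq_left (hw0 y)]
  have hw'0 : ∀ y, 0 ≤ w' y := fun y => le_max_right _ 0
  have hw'loc : LocallyIntegrable w' volume := by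
    intro x0
    obtain ⟨s, hs, hint⟩ := hw x0
    exact ⟨s, hs, hint.congr (ae_restrict_of_ae hww')⟩
  have hmeas_eq : wMeasure w = wMeasure w' := by
    rw [wMeasure, wMeasure]
    exact withDensity_congr_ae (hww'.mono fun y hy => by dsimp only; rw [hy])
  have hbdd' : ∀ f : (Fin n → ℝ) → ℝ,
      lpNormE (skelMax n k (4 * δ) f) p (wMeasure w') ≤
        ENNReal.ofReal C * eLpNorm f (ENNReal.ofReal p) (wMeasure w') := by
    intro f
    rw [← hmeas_eq]
    exact hbdd f
  obtain ⟨B, hB⟩ := necessary_condition_k_aux n k hkn δ p hδ hp w' hw'm hw'0 hw'loc C hbdd'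
  refine ⟨B, fun x r hr => ?_⟩
  have e1 : ∫ y in cube x δ, w y = ∫ y in cube x δ, w' y :=
    integral_congr_ae (ae_restrict_of_ae hww')
  have e2 : ∀ A : Set (Fin n → ℝ), (ravg A fun y => w y ^ (-(p / (p - 1)) / p)) =
      ravg A fun y => w' y ^ (-(p / (p - 1)) / p) := by
    intro A
    rw [ravg, ravg]
    congr 1
    exact integral_congr_ae (ae_restrict_of_ae (hww'.mono fun y hy => by dsimp only; rw [hy]))
  rw [e1, iInf_congr fun F => e2 (faceNbhd k δ x r F), e2 (skelNbhd k δ x r)]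
  exact hB x r hr


end
end

section
/- Fix integers 0 ≤ k < n, let 0 < δ < 1 with 1/δ ∈ ℕ, z ∈ ℤⁿ, ρ ∈ Γ, and let 1 < p < ∞ with p' ∈ ℕ. Let w be a weight with [w]_{A^{S_k}_{p,ρ,z}} < ∞, where the face selection is the one produced by the face-selection algorithm (so that every affine k-plane parallel to a coordinate k-plane contains at most C_{n,k}·u^{1−(n−k)(2n−1)/(2n²)} of the chosen faces, with u = δ^{−n}). Then there is a constant C(k,n), depending only on k and n, such that ‖\tilde M^k_{ρ,δ} f‖_{L^p(Q_z,w)} ≤ C(k,n)·δ^{(1/p)((n−k)(2n−1)/(2n) − n)}·[w]_{A^{S_k}_{p,ρ,z}}^{1/p}·‖f‖_{L^p(7Q_z,w)} for all f. -/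
open MeasureTheory Metric Set
open scoped ENNReal NNReal

noncomputable section

variable {n : ℕ}

lemma kFace_nonempty {k : ℕ} (x : Fin n → ℝ) {r : ℝ} (hr : 0 ≤ r) (F : FaceIdx n k) :
    (kFace k x r F).Nonempty := by
  refine ⟨fun i => if i ∈ F.1.1 then x i else x i + (if F.2 i then r else -r), fun i hi => ?_,
    fun i hi => ?_⟩
  · simp [hi, hr]
  · simp [hi]

lemma isClosed_kFace {k : ℕ} (x : Fin n → ℝ) (r : ℝ) (F : FaceIdx n k) :
    IsClosed (kFace k x r F) := by
  have h : kFace k x r F =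
      ⋂ i, (if i ∈ F.1.1 then {y : Fin n → ℝ | |y i - x i| ≤ r}
            else {y : Fin n → ℝ | y i = x i + (if F.2 i then r else -r)}) := by
    ext y
    simp only [kFace, Set.mem_setOf_eq, Set.mem_iInter]
    constructor
    · rintro ⟨h1, h2⟩ i
      by_cases hi : i ∈ F.1.1 <;> simp [hi, h1 i, h2 i]
    · intro h
      constructor <;> intro i hi <;> have := h i <;> simp [hi] at this <;> exact this
  rw [h]
  refine isClosed_iInter fun i => ?_
  by_cases hi : i ∈ F.1.1 <;> simp only [hi, if_true, if_false]
  · exact isClosed_le ((continuous_apply i).sub continuous_const).abs continuous_const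
  · exact isClosed_eq (continuous_apply i) continuous_const

lemma kFace_subset_closedBall {k : ℕ} (x : Fin n → ℝ) {r : ℝ} (hr : 0 ≤ r) (F : FaceIdx n k) :
    kFace k x r F ⊆ Metric.closedBall x r := by
  rintro y ⟨h1, h2⟩
  rw [Metric.mem_closedBall, dist_pi_le_iff hr]
  intro i
  rw [Real.dist_eq]
  by_cases hi : i ∈ F.1.1
  · exact h1 i hi
  · have : y i - x i = if F.2 i then r else -r := by rw [h2 i hi]; ring
    rw [this]
    split <;> simp [abs_of_nonneg hr, hr]

lemma volume_cthickening_pos {S : Set (Fin n → ℝ)} (hS : S.Nonempty) {δ : ℝ} (hδ : 0 < δ) :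
    0 < volume (Metric.cthickening δ S) := by
  obtain ⟨x₀, hx₀⟩ := hS
  calc 0 < volume (Metric.closedBall x₀ δ) := Metric.measure_closedBall_pos volume x₀ hδ
  _ ≤ volume (Metric.cthickening δ S) :=
      measure_mono (Metric.closedBall_subset_cthickening hx₀ δ)

lemma volume_cthickening_lt_top {S : Set (Fin n → ℝ)} (hS : Bornology.IsBounded S) (δ : ℝ) :
    volume (Metric.cthickening δ S) < ⊤ := (hS.cthickening).measure_lt_top

lemma measurableSet_selFace {k N : ℕ} (z : Fin n → ℤ) (ρ : (Fin n → Fin N) → ℝ)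
    (sel : (Fin n → Fin N) → FaceIdx n k) (δ' : ℝ) (m : Fin n → Fin N) :
    MeasurableSet (selFace k N z ρ sel δ' m) :=
  (Metric.isClosed_cthickening).measurableSet

lemma measurableSet_gridCell {N : ℕ} (z : Fin n → ℤ) (m : Fin n → Fin N) :
    MeasurableSet (gridCell N z m) := by
  have : gridCell N z m = Set.univ.pi fun j =>
      Set.Ico ((z j : ℝ) + (m j : ℝ) / N) ((z j : ℝ) + ((m j : ℝ) + 1) / N) := by
    ext y; simp [gridCell, Set.mem_pi, Set.mem_Ico]
  rw [this]
  exact MeasurableSet.univ_pi fun j => measurableSet_Ico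

lemma measurableSet_unitCube (z : Fin n → ℤ) : MeasurableSet (unitCube z) := by
  have : unitCube z = Set.univ.pi fun j => Set.Icc ((z j : ℝ)) ((z j : ℝ) + 1) := by
    ext y
    simp only [unitCube, Set.mem_setOf_eq, Set.mem_pi, Set.mem_univ, forall_true_left,
      Set.mem_Icc]
  rw [this]
  exact MeasurableSet.univ_pi fun j => measurableSet_Icc

lemma measurableSet_sevenCube (z : Fin n → ℤ) : MeasurableSet (sevenCube z) := by
  have : sevenCube z = Set.univ.pi fun j =>
      Set.Icc ((z j : ℝ) + 1 / 2 - 7 / 2) ((z j : ℝ) + 1 / 2 + 7 / 2) := by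
    ext y
    simp only [sevenCube, Set.mem_setOf_eq, Set.mem_pi, Set.mem_univ, forall_true_left,
      Set.mem_Icc]
    refine forall_congr' fun j => ?_
    rw [abs_le]
    constructor <;> intro h <;> constructor <;> linarith [h.1, h.2]
  rw [this]
  exact MeasurableSet.univ_pi fun j => measurableSet_Icc

lemma gridCell_disjoint {N : ℕ} {z : Fin n → ℤ} (hN : 0 < N) {m m' : Fin n → Fin N}
    (h : m ≠ m') : Disjoint (gridCell N z m) (gridCell N z m') := by
  rw [Set.disjoint_left]
  rintro y hy hy'
  apply h
  funext j
  have h1 := hy j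
  have h2 := hy' j
  have hNR : (0 : ℝ) < N := by exact_mod_cast hN
  have key : ∀ a b : Fin N, (z j : ℝ) + (a : ℝ) / N ≤ y j →
      y j < (z j : ℝ) + ((b : ℝ) + 1) / N → (a : ℕ) ≤ (b : ℕ) := by
    intro a b hle hlt
    have h2 : (a : ℝ) / N < ((b : ℝ) + 1) / N := by linarith
    have h3 : (a : ℝ) < (b : ℝ) + 1 := by
      rwa [div_lt_div_iff_of_pos_right hNR] at h2
    have h4 : (a : ℕ) < (b : ℕ) + 1 := by exact_mod_cast h3
    omega
  exact Fin.ext (le_antisymm (key _ _ h1.1 h2.2) (key _ _ h2.1 h1.2))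

lemma gridCell_subset_unitCube {N : ℕ} {z : Fin n → ℤ} (m : Fin n → Fin N) :
    gridCell N z m ⊆ unitCube z := by
  intro y hy j
  have h := hy j
  have hN : (0 : ℝ) < N := by
    have := (m j).pos; exact_mod_cast this
  have h1 : (0 : ℝ) ≤ (m j : ℝ) / N := by positivity
  have h2 : ((m j : ℝ) + 1) / N ≤ 1 := by
    rw [div_le_one hN]
    have : ((m j : ℕ) : ℝ) + 1 ≤ N := by exact_mod_cast (m j).2
    linarith
  exact ⟨by linarith [h.1], by linarith [h.2]⟩

lemma selFace_subset_sevenCube {k N : ℕ} (hN : 1 < N) (z : Fin n → ℤ)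
    {ρ : (Fin n → Fin N) → ℝ} (hρ : inGamma N ρ)
    (sel : (Fin n → Fin N) → FaceIdx n k) (m : Fin n → Fin N) :
    selFace k N z ρ sel ((N : ℝ)⁻¹) m ⊆ sevenCube z := by
  have hNR : (1 : ℝ) < N := by exact_mod_cast hN
  have hρm := (hρ m).1
  intro y hy
  have hr0 : (0 : ℝ) ≤ ρ m := le_trans zero_le_one hρm.1
  have h1 : selFace k N z ρ sel ((N : ℝ)⁻¹) m ⊆
      Metric.cthickening ((N : ℝ)⁻¹) (Metric.closedBall (gridCenter N z m) (ρ m)) :=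
    Metric.cthickening_subset_of_subset _ (kFace_subset_closedBall _ hr0 _)
  have h2 : Metric.cthickening ((N : ℝ)⁻¹) (Metric.closedBall (gridCenter N z m) (ρ m)) ⊆
      Metric.closedBall (gridCenter N z m) ((N : ℝ)⁻¹ + ρ m) :=
    subset_of_eq (cthickening_closedBall (by positivity) hr0 _)
  have hy2 := h2 (h1 hy)
  rw [Metric.mem_closedBall] at hy2
  intro j
  have hj : |y j - gridCenter N z m j| ≤ (N : ℝ)⁻¹ + ρ m := by
    calc |y j - gridCenter N z m j| = dist (y j) (gridCenter N z m j) := (Real.dist_eq _ _).symm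
    _ ≤ dist y (gridCenter N z m) := dist_le_pi_dist _ _ j
    _ ≤ (N : ℝ)⁻¹ + ρ m := hy2
  have hc : |gridCenter N z m j - ((z j : ℝ) + 1 / 2)| ≤ 1 / 2 := by
    have hNpos : (0 : ℝ) < N := by linarith
    have hm1 : (0 : ℝ) ≤ ((m j : ℝ) + 1 / 2) / N := by positivity
    have hm2 : ((m j : ℝ) + 1 / 2) / N ≤ 1 := by
      rw [div_le_one hNpos]
      have : ((m j : ℕ) : ℝ) + 1 ≤ N := by exact_mod_cast (m j).2
      linarith
    have : gridCenter N z m j - ((z j : ℝ) + 1 / 2) = ((m j : ℝ) + 1 / 2) / N - 1 / 2 := by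
      simp only [gridCenter]; ring
    rw [this, abs_le]
    constructor <;> linarith
  have hinv : (N : ℝ)⁻¹ ≤ 1 := by
    rw [inv_le_one_iff₀]; right; linarith
  calc |y j - ((z j : ℝ) + 1 / 2)|
      ≤ |y j - gridCenter N z m j| + |gridCenter N z m j - ((z j : ℝ) + 1 / 2)| :=
        abs_sub_le _ _ _
  _ ≤ ((N : ℝ)⁻¹ + ρ m) + 1 / 2 := add_le_add hj hc
  _ ≤ 7 / 2 := by linarith [hρm.2]

lemma holder_avg {α : Type*} [MeasurableSpace α] {ν : Measure α} {f : α → ℝ} {W : α → ℝ≥0∞}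
    (hW : AEMeasurable W ν) (hWfin : ∀ᵐ y ∂ν, W y ≠ ⊤) {p : ℝ} (hp : 1 < p)
    (hB : ∫⁻ y, W y ^ (1 - p / (p - 1)) ∂ν ≠ ⊤) :
    (‖∫ y, f y ∂ν‖₊ : ℝ≥0∞) ^ p ≤
      (∫⁻ y, (‖f y‖₊ : ℝ≥0∞) ^ p * W y ∂ν) * (∫⁻ y, W y ^ (1 - p / (p - 1)) ∂ν) ^ (p - 1) := by
  set q : ℝ := p / (p - 1) with hq
  have hpq : p.HolderConjugate q := Real.HolderConjugate.conjExponent hp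
  have hp0 : (0 : ℝ) < p := hpq.pos
  by_cases hf : Integrable f ν
  · -- the main case
    have hfm : AEMeasurable (fun y => (‖f y‖₊ : ℝ≥0∞)) ν := hf.aestronglyMeasurable.enorm
    -- W ≠ 0 a.e.
    have hWpos : ∀ᵐ y ∂ν, W y ≠ 0 := by
      have h1 : AEMeasurable (fun y => W y ^ (1 - q)) ν := hW.pow_const _
      filter_upwards [ae_lt_top' h1 hB] with y hy
      intro h0
      rw [h0, ENNReal.zero_rpow_of_neg (by
        rw [hq, sub_neg, one_lt_div (by linarith)]; linarith : 1 - q < 0)] at hy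
      exact (lt_irrefl _ hy).elim
    have hp1 : p - 1 ≠ 0 := by linarith
    have hpne : p ≠ 0 := by linarith
    have hqpos : (0 : ℝ) < q := hpq.symm.pos
    set g : α → ℝ≥0∞ := fun y => (‖f y‖₊ : ℝ≥0∞) * W y ^ (1 / p) with hgdef
    set h : α → ℝ≥0∞ := fun y => W y ^ (-(1 / p)) with hhdef
    have key : ∀ᵐ y ∂ν, (‖f y‖₊ : ℝ≥0∞) = g y * h y := by
      filter_upwards [hWpos, hWfin] with y h0 htop
      have hpow0 : W y ^ (1 / p) ≠ 0 := by
        simp [ENNReal.rpow_eq_zero_iff, h0, htop]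
      have hpowtop : W y ^ (1 / p) ≠ ⊤ := by
        simp [ENNReal.rpow_eq_top_iff, h0, htop]
      rw [hgdef, hhdef]
      simp only
      rw [ENNReal.rpow_neg, mul_assoc, ENNReal.mul_inv_cancel hpow0 hpowtop, mul_one]
    have hg : AEMeasurable g ν := hfm.mul (hW.pow_const _)
    have hh : AEMeasurable h ν := hW.pow_const _
    have holder := ENNReal.lintegral_mul_le_Lp_mul_Lq ν hpq hg hh
    have hgp : ∀ y, g y ^ p = (‖f y‖₊ : ℝ≥0∞) ^ p * W y := by
      intro y
      rw [hgdef]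
      simp only
      rw [ENNReal.mul_rpow_of_nonneg _ _ hp0.le, ← ENNReal.rpow_mul,
        one_div_mul_cancel hpne, ENNReal.rpow_one]
    have hhq : ∀ y, h y ^ q = W y ^ (1 - q) := by
      intro y
      rw [hhdef]
      simp only
      rw [← ENNReal.rpow_mul]
      congr 1
      rw [hq]
      field_simp
      ring
    have hI : (‖∫ y, f y ∂ν‖₊ : ℝ≥0∞) ≤ ∫⁻ y, g y * h y ∂ν := by
      refine le_trans (enorm_integral_le_lintegral_enorm f) ?_
      exact le_of_eq (lintegral_congr_ae key)
    calc (‖∫ y, f y ∂ν‖₊ : ℝ≥0∞) ^ p ≤ (∫⁻ y, g y * h y ∂ν) ^ p :=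
          ENNReal.rpow_le_rpow hI hp0.le
    _ ≤ ((∫⁻ y, g y ^ p ∂ν) ^ (1 / p) * (∫⁻ y, h y ^ q ∂ν) ^ (1 / q)) ^ p :=
          ENNReal.rpow_le_rpow holder hp0.le
    _ = (∫⁻ y, (‖f y‖₊ : ℝ≥0∞) ^ p * W y ∂ν) *
          (∫⁻ y, W y ^ (1 - q) ∂ν) ^ (p - 1) := by
        rw [ENNReal.mul_rpow_of_nonneg _ _ hp0.le, ← ENNReal.rpow_mul, ← ENNReal.rpow_mul,
          one_div_mul_cancel hpne, ENNReal.rpow_one]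
        have e2 : 1 / q * p = p - 1 := by
          rw [hq]
          field_simp
        rw [e2, lintegral_congr fun y => hgp y, lintegral_congr fun y => hhq y]
  · rw [integral_undef hf]
    simp only [nnnorm_zero, ENNReal.coe_zero]
    rw [ENNReal.zero_rpow_of_pos hp0]
    exact bot_le

lemma face_count {k N : ℕ} (hN : 1 < N) (z : Fin n → ℤ) {ρ : (Fin n → Fin N) → ℝ}
    (hρ : inGamma N ρ) (sel : (Fin n → Fin N) → FaceIdx n k) {B : ℝ} (hB : 0 ≤ B)
    (hsel : ∀ T : Finset (Fin n), T.card = k → ∀ a : Fin n → ℝ,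
        ({m : Fin n → Fin N |
            kFace k (gridCenter N z m) (ρ m) (sel m) ⊆ {y | ∀ j ∉ T, y j = a j}}.ncard : ℝ) ≤ B)
    (y : Fin n → ℝ) :
    (({m : Fin n → Fin N | y ∈ selFace k N z ρ sel ((N : ℝ)⁻¹) m}).ncard : ℝ) ≤
      (18 : ℝ) ^ n * B := by
  classical
  have hNR : (0 : ℝ) < N := by exact_mod_cast Nat.lt_of_lt_of_le Nat.zero_lt_one hN.le
  set t : (Fin n → Fin N) → ℤ := fun m => (hρ m).2.choose with htdef
  have ht : ∀ m, ρ m = (t m : ℝ) / N := fun m => (hρ m).2.choose_spec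
  set s : (Fin n → Fin N) → Fin n → ℤ := fun m j =>
    2 * (m j : ℤ) + 1 + (if (sel m).2 j then 2 * t m else -(2 * t m)) with hsdef
  have keyval : ∀ m, ∀ y' ∈ kFace k (gridCenter N z m) (ρ m) (sel m),
      ∀ j ∉ (sel m).1.1, y' j = (z j : ℝ) + (s m j : ℝ) / (2 * N) := by
    intro m y' hy' j hj
    have h1 := hy'.2 j hj
    rw [h1, gridCenter, ht m, hsdef]
    simp only
    split <;> push_cast <;> field_simp <;> ring
  set c : Fin n → ℝ := fun j => 2 * N * (y j - z j) with hcdef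
  set d : (Fin n → Fin N) → Fin n → ℤ := fun m j => s m j - ⌊c j⌋ with hddef
  set S := Finset.univ.filter fun m : Fin n → Fin N =>
    y ∈ selFace k N z ρ sel ((N : ℝ)⁻¹) m with hSdef
  have hd : ∀ m ∈ S, ∀ j ∉ (sel m).1.1, d m j ∈ Finset.Icc (-4 : ℤ) 4 := by
    intro m hm j hj
    have hyS : y ∈ selFace k N z ρ sel ((N : ℝ)⁻¹) m := (Finset.mem_filter.mp hm).2
    have hsub : selFace k N z ρ sel ((N : ℝ)⁻¹) m ⊆
        Metric.thickening (2 / N) (kFace k (gridCenter N z m) (ρ m) (sel m)) := by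
      apply Metric.cthickening_subset_thickening' (by positivity)
      rw [inv_eq_one_div]
      apply div_lt_div_of_pos_right (by norm_num) hNR
    obtain ⟨y', hy', hdist⟩ := Metric.mem_thickening_iff.mp (hsub hyS)
    have hyj : |y j - y' j| < 2 / N := by
      calc |y j - y' j| = dist (y j) (y' j) := (Real.dist_eq _ _).symm
      _ ≤ dist y y' := dist_le_pi_dist _ _ j
      _ < 2 / N := hdist
    rw [keyval m y' hy' j hj] at hyj
    have habs : |c j - (s m j : ℝ)| < 4 := by
      have h2 : c j - (s m j : ℝ) = 2 * N * (y j - ((z j : ℝ) + (s m j : ℝ) / (2 * N))) := by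
        rw [hcdef]; field_simp; ring
      rw [h2, abs_mul, abs_of_pos (by positivity : (0:ℝ) < 2 * N)]
      calc 2 * N * |y j - ((z j : ℝ) + (s m j : ℝ) / (2 * N))| < 2 * N * (2 / N) := by
            apply mul_lt_mul_of_pos_left hyj (by positivity)
      _ = 4 := by field_simp; ring
    have hfl1 : (⌊c j⌋ : ℝ) ≤ c j := Int.floor_le _
    have hfl2 : c j < (⌊c j⌋ : ℝ) + 1 := Int.lt_floor_add_one _
    have hdr : |(d m j : ℝ)| < 5 := by
      rw [hddef]
      push_cast
      rw [abs_sub_comm] at habs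
      have := abs_sub_le ((⌊c j⌋ : ℝ)) (c j) ((s m j : ℝ))
      have h3 : |(⌊c j⌋ : ℝ) - c j| < 1 := by rw [abs_lt]; constructor <;> linarith
      calc |(s m j : ℝ) - (⌊c j⌋ : ℝ)| = |(⌊c j⌋ : ℝ) - (s m j : ℝ)| := abs_sub_comm _ _
      _ ≤ |(⌊c j⌋ : ℝ) - c j| + |c j - (s m j : ℝ)| := abs_sub_le _ _ _
      _ < 5 := by rw [abs_sub_comm] at habs; linarith
    rw [abs_lt] at hdr
    have hdz1 : (-5 : ℤ) < d m j := by exact_mod_cast hdr.1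
    have hdz2 : d m j < 5 := by exact_mod_cast hdr.2
    rw [Finset.mem_Icc]
    omega
  set cl : (Fin n → Fin N) → Finset (Fin n) × (Fin n → ℤ) := fun m =>
    ((sel m).1.1, fun j => if j ∈ (sel m).1.1 then 0 else d m j) with hcldef
  have hfiber : ∀ b ∈ S.image cl, ((S.filter fun m => cl m = b).card : ℝ) ≤ B := by
    intro b hb
    obtain ⟨m₀, hm₀S, hm₀⟩ := Finset.mem_image.mp hb
    have hTk : b.1.card = k := by rw [← hm₀]; exact (sel m₀).1.2
    set a : Fin n → ℝ := fun j => (z j : ℝ) + ((⌊c j⌋ + b.2 j : ℤ) : ℝ) / (2 * N) with hadef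
    have hsub : (↑(S.filter fun m => cl m = b) : Set (Fin n → Fin N)) ⊆
        {m : Fin n → Fin N |
          kFace k (gridCenter N z m) (ρ m) (sel m) ⊆ {y' | ∀ j ∉ b.1, y' j = a j}} := by
      intro m hm
      rw [Finset.mem_coe, Finset.mem_filter] at hm
      obtain ⟨hmS, hcl⟩ := hm
      intro y' hy' j hj
      have hT : (sel m).1.1 = b.1 := congrArg Prod.fst hcl
      have hj' : j ∉ (sel m).1.1 := by rw [hT]; exact hj
      have hb2 : b.2 j = d m j := by
        have := congrArg Prod.snd hcl
        rw [← this]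
        simp only [hcldef, if_neg hj']
      rw [keyval m y' hy' j hj', hadef]
      simp only
      congr 1
      rw [hb2, hddef]
      push_cast
      ring_nf
    calc ((S.filter fun m => cl m = b).card : ℝ)
        = ((↑(S.filter fun m => cl m = b) : Set (Fin n → Fin N)).ncard : ℝ) := by
          rw [Set.ncard_coe_finset]
    _ ≤ (({m : Fin n → Fin N |
          kFace k (gridCenter N z m) (ρ m) (sel m) ⊆ {y' | ∀ j ∉ b.1, y' j = a j}}).ncard : ℝ) := by
          exact_mod_cast Nat.cast_le.mpr (Set.ncard_le_ncard hsub (Set.toFinite _))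
    _ ≤ B := hsel b.1 hTk a
  have himg : S.image cl ⊆
      Finset.univ ×ˢ Fintype.piFinset fun _ : Fin n => Finset.Icc (-4 : ℤ) 4 := by
    intro b hb
    obtain ⟨m, hmS, rfl⟩ := Finset.mem_image.mp hb
    rw [Finset.mem_product]
    refine ⟨Finset.mem_univ _, Fintype.mem_piFinset.mpr fun j => ?_⟩
    by_cases hj : j ∈ (sel m).1.1
    · simp only [hcldef, if_pos hj]
      rw [Finset.mem_Icc]
      omega
    · simp only [hcldef, if_neg hj]
      exact hd m hmS j hj
  have himgcard : ((S.image cl).card : ℝ) ≤ (18 : ℝ) ^ n := by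
    have h1 : (S.image cl).card ≤ 2 ^ n * 9 ^ n := by
      calc (S.image cl).card ≤
          (Finset.univ ×ˢ Fintype.piFinset fun _ : Fin n => Finset.Icc (-4 : ℤ) 4).card :=
            Finset.card_le_card himg
      _ = 2 ^ n * 9 ^ n := by
          rw [Finset.card_product, Fintype.card_piFinset]
          congr 1
          · rw [Finset.card_univ, Fintype.card_finset, Fintype.card_fin]
          · simp [Int.card_Icc]
    calc ((S.image cl).card : ℝ) ≤ ((2 ^ n * 9 ^ n : ℕ) : ℝ) := by exact_mod_cast h1
    _ = (18 : ℝ) ^ n := by push_cast; rw [← mul_pow]; norm_num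
  have hcount : ({m : Fin n → Fin N | y ∈ selFace k N z ρ sel ((N : ℝ)⁻¹) m}).ncard = S.card := by
    rw [hSdef, Set.ncard_eq_toFinset_card', Set.toFinset_setOf]
  rw [hcount]
  calc ((S.card : ℕ) : ℝ)
      = ∑ b ∈ S.image cl, ((S.filter fun m => cl m = b).card : ℝ) := by
        rw [Finset.card_eq_sum_card_fiberwise fun x hx => Finset.mem_image_of_mem cl hx]
        push_cast
        rfl
  _ ≤ ∑ _b ∈ S.image cl, B := Finset.sum_le_sum hfiber
  _ = ((S.image cl).card : ℝ) * B := by rw [Finset.sum_const, nsmul_eq_mul]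
  _ ≤ (18 : ℝ) ^ n * B := mul_le_mul_of_nonneg_right himgcard hB

lemma volume_selFace_pos {k N : ℕ} (hN : 0 < N) (z : Fin n → ℤ) {ρ : (Fin n → Fin N) → ℝ}
    (hρ : inGamma N ρ) (sel : (Fin n → Fin N) → FaceIdx n k) (m : Fin n → Fin N) :
    volume (selFace k N z ρ sel ((N : ℝ)⁻¹) m) ≠ 0 := by
  have hNR : (0 : ℝ) < N := by exact_mod_cast hN
  have hr : (0 : ℝ) ≤ ρ m := le_trans zero_le_one (hρ m).1.1
  exact (volume_cthickening_pos (kFace_nonempty _ hr _) (by positivity)).ne'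

lemma volume_selFace_lt_top {k N : ℕ} (z : Fin n → ℤ) {ρ : (Fin n → Fin N) → ℝ}
    (hρ : inGamma N ρ) (sel : (Fin n → Fin N) → FaceIdx n k) (m : Fin n → Fin N) :
    volume (selFace k N z ρ sel ((N : ℝ)⁻¹) m) ≠ ⊤ := by
  have hr : (0 : ℝ) ≤ ρ m := le_trans zero_le_one (hρ m).1.1
  exact (volume_cthickening_lt_top
    (Metric.isBounded_closedBall.subset (kFace_subset_closedBall _ hr _)) _).ne

set_option maxHeartbeats 1000000 in
/-- local weighted bound for the linearized `k`-skeleton maximal operator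
in `ℝⁿ`: for `p' ∈ ℕ` and a face selection satisfying the `k`-plane count property,
`‖M̃^k_{ρ,δ} f‖_{L^p(Q_z,w)} ≤ C(k,n) δ^{(1/p)((n-k)(2n-1)/(2n) - n)}
[w]_{A^{S_k}_{p,ρ,z}}^{1/p} ‖f‖_{L^p(7Q_z,w)}`. -/
theorem sufficient_local_k (n k : ℕ) (hkn : k < n) (p : ℝ) (hp : 1 < p)
    (hp' : ∃ m : ℕ, p / (p - 1) = (m : ℝ)) (A : ℝ) (hA : 0 < A) :
    ∃ C : ℝ, 0 < C ∧
      ∀ (N : ℕ), 1 < N → ∀ (δ : ℝ), δ = (N : ℝ)⁻¹ →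
      ∀ (z : Fin n → ℤ) (ρ : (Fin n → Fin N) → ℝ), inGamma N ρ →
      ∀ sel : (Fin n → Fin N) → FaceIdx n k,
      (∀ T : Finset (Fin n), T.card = k → ∀ a : Fin n → ℝ,
        ({m : Fin n → Fin N |
            kFace k (gridCenter N z m) (ρ m) (sel m) ⊆ {y | ∀ j ∉ T, y j = a j}}.ncard : ℝ) ≤
          A * ((N : ℝ) ^ (n : ℝ)) ^ (1 - ((n : ℝ) - k) * (2 * n - 1) / (2 * n ^ 2))) →
      ∀ w : (Fin n → ℝ) → ℝ, (∀ x, 0 ≤ w x) → LocallyIntegrable w volume →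
      ApLoc k N z ρ sel w p ≠ ⊤ →
      ∀ f : (Fin n → ℝ) → ℝ,
        eLpNorm (linMax k N z ρ sel δ f) (ENNReal.ofReal p)
            ((wMeasure w).restrict (unitCube z)) ≤
          ENNReal.ofReal
              (C * δ ^ ((1 / p) * (((n : ℝ) - k) * (2 * n - 1) / (2 * n) - n))) *
            ApLoc k N z ρ sel w p ^ (1 / p) *
            eLpNorm f (ENNReal.ofReal p) ((wMeasure w).restrict (sevenCube z)) := by
  classical
  have hp0 : (0 : ℝ) < p := by linarith
  have hpne : p ≠ 0 := hp0.ne'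
  refine ⟨((18 : ℝ) ^ n * A) ^ (1 / p), by positivity, ?_⟩
  intro N hN δ hδ z ρ hρ sel hsel w hw hwloc hAp f
  subst hδ
  have hNpos : 0 < N := lt_trans Nat.zero_lt_one hN
  have hNR : (0 : ℝ) < N := by exact_mod_cast hNpos
  have hWmeas : AEMeasurable (fun y => ENNReal.ofReal (w y)) volume :=
    hwloc.aestronglyMeasurable.aemeasurable.ennreal_ofReal
  have hlmeas : ∀ m, MeasurableSet (selFace k N z ρ sel ((N : ℝ)⁻¹) m) :=
    fun m => measurableSet_selFace z ρ sel _ m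
  have hl7 : ∀ m, selFace k N z ρ sel ((N : ℝ)⁻¹) m ⊆ sevenCube z :=
    fun m => selFace_subset_sevenCube hN z hρ sel m
  have hV0 : ∀ m, volume (selFace k N z ρ sel ((N : ℝ)⁻¹) m) ≠ 0 :=
    volume_selFace_pos hNpos z hρ sel
  have hVtop : ∀ m, volume (selFace k N z ρ sel ((N : ℝ)⁻¹) m) ≠ ⊤ :=
    volume_selFace_lt_top z hρ sel
  set c : (Fin n → Fin N) → ℝ := fun m =>
    (volume (selFace k N z ρ sel ((N : ℝ)⁻¹) m)).toReal⁻¹ *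
      ∫ y in selFace k N z ρ sel ((N : ℝ)⁻¹) m, f y with hcdef
  have hq0 : (ENNReal.ofReal p) ≠ 0 := by
    simp only [ne_eq, ENNReal.ofReal_eq_zero, not_le]; linarith
  have hqtop : (ENNReal.ofReal p) ≠ ⊤ := ENNReal.ofReal_ne_top
  have hqreal : (ENNReal.ofReal p).toReal = p := ENNReal.toReal_ofReal hp0.le
  set ν := (volume.restrict (sevenCube z)).withDensity
    (fun y => (‖f y‖₊ : ℝ≥0∞) ^ p * ENNReal.ofReal (w y)) with hνdef
  -- Step A : pointwise identity for the power of the linearized maximal function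
  have hpt : ∀ x, (‖linMax k N z ρ sel ((N : ℝ)⁻¹) f x‖₊ : ℝ≥0∞) ^ p
      = ∑ m : Fin n → Fin N,
          (gridCell N z m).indicator (fun _ => (‖c m‖₊ : ℝ≥0∞) ^ p) x := by
    intro x
    have hlin : linMax k N z ρ sel ((N : ℝ)⁻¹) f x = ∑ m : Fin n → Fin N,
        (gridCell N z m).indicator (fun _ => c m) x := rfl
    by_cases hx : ∃ m₀, x ∈ gridCell N z m₀
    · obtain ⟨m₀, hm₀⟩ := hx
      have huniq : ∀ m, m ≠ m₀ → x ∉ gridCell N z m := by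
        intro m hm hxm
        exact Set.disjoint_left.mp (gridCell_disjoint hNpos hm) hxm hm₀
      have h1 : linMax k N z ρ sel ((N : ℝ)⁻¹) f x = c m₀ := by
        rw [hlin, Finset.sum_eq_single m₀]
        · rw [Set.indicator_of_mem hm₀]
        · intro m _ hm
          rw [Set.indicator_of_notMem (huniq m hm)]
        · intro h; exact absurd (Finset.mem_univ m₀) h
      rw [h1, Finset.sum_eq_single m₀]
      · rw [Set.indicator_of_mem hm₀]
      · intro m _ hm
        rw [Set.indicator_of_notMem (huniq m hm)]
      · intro h; exact absurd (Finset.mem_univ m₀) h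
    · push_neg at hx
      have h1 : linMax k N z ρ sel ((N : ℝ)⁻¹) f x = 0 := by
        rw [hlin]
        exact Finset.sum_eq_zero fun m _ => Set.indicator_of_notMem (hx m) _
      rw [h1, Finset.sum_eq_zero fun m _ => Set.indicator_of_notMem (hx m) _]
      simp only [nnnorm_zero, ENNReal.coe_zero]
      exact ENNReal.zero_rpow_of_pos hp0
  -- Step C : per-cell bound
  have hterm : ∀ m : Fin n → Fin N,
      (‖c m‖₊ : ℝ≥0∞) ^ p * (∫⁻ y in gridCell N z m, ENNReal.ofReal (w y)) ≤
        ApLoc k N z ρ sel w p * ν (selFace k N z ρ sel ((N : ℝ)⁻¹) m) := by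
    intro m
    set V := volume (selFace k N z ρ sel ((N : ℝ)⁻¹) m) with hVdef
    set Bm := ∫⁻ y in selFace k N z ρ sel ((N : ℝ)⁻¹) m,
      ENNReal.ofReal (w y) ^ (1 - p / (p - 1)) with hBmdef
    set Cell := ∫⁻ y in gridCell N z m, ENNReal.ofReal (w y) with hCelldef
    have hApTerm : (V⁻¹ * Cell) * (V⁻¹ * Bm) ^ (p - 1) ≤ ApLoc k N z ρ sel w p :=
      le_iSup (fun m' => ((volume (selFace k N z ρ sel ((N : ℝ)⁻¹) m'))⁻¹ *
          ∫⁻ y in gridCell N z m', ENNReal.ofReal (w y)) *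
        ((volume (selFace k N z ρ sel ((N : ℝ)⁻¹) m'))⁻¹ *
          ∫⁻ y in selFace k N z ρ sel ((N : ℝ)⁻¹) m',
            ENNReal.ofReal (w y) ^ (1 - p / (p - 1))) ^ (p - 1)) m
    have hVinv0 : V⁻¹ ≠ 0 := ENNReal.inv_ne_zero.mpr (hVtop m)
    have hVinvtop : V⁻¹ ≠ ⊤ := ENNReal.inv_ne_top.mpr (hV0 m)
    have hνl : ν (selFace k N z ρ sel ((N : ℝ)⁻¹) m) =
        ∫⁻ y in selFace k N z ρ sel ((N : ℝ)⁻¹) m,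
          (‖f y‖₊ : ℝ≥0∞) ^ p * ENNReal.ofReal (w y) := by
      rw [hνdef, withDensity_apply _ (hlmeas m), Measure.restrict_restrict (hlmeas m),
        Set.inter_eq_self_of_subset_left (hl7 m)]
    by_cases hBtop : Bm = ⊤
    · have hcell0 : Cell = 0 := by
        by_contra h0
        apply hAp
        rw [eq_top_iff]
        refine le_trans (le_of_eq ?_) hApTerm
        rw [hBtop, ENNReal.mul_top hVinv0,
          ENNReal.top_rpow_of_pos (by linarith : (0 : ℝ) < p - 1),
          ENNReal.mul_top (mul_ne_zero hVinv0 h0)]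
      rw [hcell0, mul_zero]
      exact bot_le
    · have hold := holder_avg (f := f)
        (hWmeas.restrict (s := selFace k N z ρ sel ((N : ℝ)⁻¹) m))
        (ae_of_all _ fun y => ENNReal.ofReal_ne_top) hp hBtop
      have hcnorm : (‖c m‖₊ : ℝ≥0∞) =
          V⁻¹ * (‖∫ y in selFace k N z ρ sel ((N : ℝ)⁻¹) m, f y‖₊ : ℝ≥0∞) := by
        rw [hcdef]
        simp only
        rw [nnnorm_mul, ENNReal.coe_mul]
        congr 1
        rw [← enorm_eq_nnnorm, Real.enorm_eq_ofReal (inv_nonneg.mpr ENNReal.toReal_nonneg),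
          ENNReal.ofReal_inv_of_pos (ENNReal.toReal_pos (hV0 m) (hVtop m)),
          ENNReal.ofReal_toReal (hVtop m)]
      have hVp : (V⁻¹ : ℝ≥0∞) ^ p = V⁻¹ * V⁻¹ ^ (p - 1) := by
        have h1 := ENNReal.rpow_add (x := V⁻¹) 1 (p - 1) hVinv0 hVinvtop
        have h2 : 1 + (p - 1) = p := by ring
        rw [h2, ENNReal.rpow_one] at h1
        exact h1
      calc (‖c m‖₊ : ℝ≥0∞) ^ p * Cell
          = V⁻¹ ^ p *
            (‖∫ y in selFace k N z ρ sel ((N : ℝ)⁻¹) m, f y‖₊ : ℝ≥0∞) ^ p * Cell := by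
            rw [hcnorm, ENNReal.mul_rpow_of_nonneg _ _ hp0.le]
      _ ≤ V⁻¹ ^ p * ((∫⁻ y in selFace k N z ρ sel ((N : ℝ)⁻¹) m,
              (‖f y‖₊ : ℝ≥0∞) ^ p * ENNReal.ofReal (w y)) * Bm ^ (p - 1)) * Cell := by
            gcongr
      _ = ((V⁻¹ * Cell) * (V⁻¹ * Bm) ^ (p - 1)) *
            (∫⁻ y in selFace k N z ρ sel ((N : ℝ)⁻¹) m,
              (‖f y‖₊ : ℝ≥0∞) ^ p * ENNReal.ofReal (w y)) := by
            rw [hVp, ENNReal.mul_rpow_of_nonneg _ _ (by linarith : (0 : ℝ) ≤ p - 1)]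
            ring
      _ ≤ ApLoc k N z ρ sel w p *
            (∫⁻ y in selFace k N z ρ sel ((N : ℝ)⁻¹) m,
              (‖f y‖₊ : ℝ≥0∞) ^ p * ENNReal.ofReal (w y)) :=
            mul_le_mul_left hApTerm _
      _ = ApLoc k N z ρ sel w p * ν (selFace k N z ρ sel ((N : ℝ)⁻¹) m) := by rw [hνl]
  -- Step D : counting bound
  have hcount : ∑ m : Fin n → Fin N, ν (selFace k N z ρ sel ((N : ℝ)⁻¹) m) ≤
      ENNReal.ofReal ((18 : ℝ) ^ n *
        (A * ((N : ℝ) ^ (n : ℝ)) ^ (1 - ((n : ℝ) - k) * (2 * n - 1) / (2 * n ^ 2)))) *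
        ν Set.univ := by
    have hmono : ∀ x : Fin n → ℝ,
        (∑ m : Fin n → Fin N,
          (selFace k N z ρ sel ((N : ℝ)⁻¹) m).indicator (fun _ => (1 : ℝ≥0∞)) x) ≤
        ENNReal.ofReal ((18 : ℝ) ^ n *
          (A * ((N : ℝ) ^ (n : ℝ)) ^ (1 - ((n : ℝ) - k) * (2 * n - 1) / (2 * n ^ 2)))) := by
      intro x
      have hcard := face_count hN z hρ sel
        (B := A * ((N : ℝ) ^ (n : ℝ)) ^ (1 - ((n : ℝ) - k) * (2 * n - 1) / (2 * n ^ 2)))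
        (by positivity) hsel x
      have hsum : (∑ m : Fin n → Fin N,
          (selFace k N z ρ sel ((N : ℝ)⁻¹) m).indicator (fun _ => (1 : ℝ≥0∞)) x)
          = (({m : Fin n → Fin N | x ∈ selFace k N z ρ sel ((N : ℝ)⁻¹) m}).ncard : ℝ≥0∞) := by
        simp only [Set.indicator_apply]
        rw [Finset.sum_boole, Set.ncard_eq_toFinset_card', Set.toFinset_setOf]
      rw [hsum, ← ENNReal.ofReal_natCast]
      exact ENNReal.ofReal_le_ofReal hcard
    calc ∑ m : Fin n → Fin N, ν (selFace k N z ρ sel ((N : ℝ)⁻¹) m)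
        = ∫⁻ x, (∑ m : Fin n → Fin N,
            (selFace k N z ρ sel ((N : ℝ)⁻¹) m).indicator (fun _ => (1 : ℝ≥0∞)) x) ∂ν := by
          rw [lintegral_finset_sum _ fun m _ => measurable_const.indicator (hlmeas m)]
          exact Finset.sum_congr rfl fun m _ => by
            rw [lintegral_indicator_const (hlmeas m), one_mul]
    _ ≤ ∫⁻ _x, ENNReal.ofReal ((18 : ℝ) ^ n *
          (A * ((N : ℝ) ^ (n : ℝ)) ^ (1 - ((n : ℝ) - k) * (2 * n - 1) / (2 * n ^ 2)))) ∂ν :=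
          lintegral_mono hmono
    _ = ENNReal.ofReal ((18 : ℝ) ^ n *
          (A * ((N : ℝ) ^ (n : ℝ)) ^ (1 - ((n : ℝ) - k) * (2 * n - 1) / (2 * n ^ 2)))) *
          ν Set.univ := lintegral_const _
  -- assembly
  have hQmeas := measurableSet_unitCube z
  have h7meas := measurableSet_sevenCube z
  rw [eLpNorm_eq_lintegral_rpow_enorm_toReal hq0 hqtop,
    eLpNorm_eq_lintegral_rpow_enorm_toReal hq0 hqtop, hqreal]
  simp only [enorm_eq_nnnorm]
  have hLHS : (∫⁻ x, (‖linMax k N z ρ sel ((N : ℝ)⁻¹) f x‖₊ : ℝ≥0∞) ^ p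
        ∂((wMeasure w).restrict (unitCube z))) ≤
      ApLoc k N z ρ sel w p *
        (ENNReal.ofReal ((18 : ℝ) ^ n *
          (A * ((N : ℝ) ^ (n : ℝ)) ^ (1 - ((n : ℝ) - k) * (2 * n - 1) / (2 * n ^ 2)))) *
          ν Set.univ) := by
    calc (∫⁻ x, (‖linMax k N z ρ sel ((N : ℝ)⁻¹) f x‖₊ : ℝ≥0∞) ^ p
          ∂((wMeasure w).restrict (unitCube z)))
        = ∫⁻ x, (∑ m : Fin n → Fin N,
            (gridCell N z m).indicator (fun _ => (‖c m‖₊ : ℝ≥0∞) ^ p) x)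
            ∂((wMeasure w).restrict (unitCube z)) := lintegral_congr fun x => hpt x
    _ = ∑ m : Fin n → Fin N, (‖c m‖₊ : ℝ≥0∞) ^ p *
          ((wMeasure w).restrict (unitCube z)) (gridCell N z m) := by
        rw [lintegral_finset_sum _ fun m _ =>
          measurable_const.indicator (measurableSet_gridCell z m)]
        exact Finset.sum_congr rfl fun m _ =>
          lintegral_indicator_const (measurableSet_gridCell z m) _
    _ ≤ ∑ m : Fin n → Fin N, (‖c m‖₊ : ℝ≥0∞) ^ p *
          (∫⁻ y in gridCell N z m, ENNReal.ofReal (w y)) := by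
        refine Finset.sum_le_sum fun m _ => mul_le_mul_right ?_ _
        rw [Measure.restrict_apply (measurableSet_gridCell z m)]
        calc (wMeasure w) (gridCell N z m ∩ unitCube z)
            ≤ (wMeasure w) (gridCell N z m) := measure_mono Set.inter_subset_left
        _ = ∫⁻ y in gridCell N z m, ENNReal.ofReal (w y) :=
            withDensity_apply _ (measurableSet_gridCell z m)
    _ ≤ ∑ m : Fin n → Fin N, ApLoc k N z ρ sel w p *
          ν (selFace k N z ρ sel ((N : ℝ)⁻¹) m) := Finset.sum_le_sum fun m _ => hterm m
    _ = ApLoc k N z ρ sel w p *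
          ∑ m : Fin n → Fin N, ν (selFace k N z ρ sel ((N : ℝ)⁻¹) m) := by
        rw [Finset.mul_sum]
    _ ≤ _ := mul_le_mul_right hcount _
  have hRHS : (∫⁻ x, (‖f x‖₊ : ℝ≥0∞) ^ p ∂((wMeasure w).restrict (sevenCube z)))
      = ν Set.univ := by
    rw [wMeasure, restrict_withDensity h7meas,
      lintegral_withDensity_eq_lintegral_mul_non_measurable₀ _ hWmeas.restrict
        (ae_of_all _ fun y => ENNReal.ofReal_lt_top), hνdef,
      withDensity_apply _ MeasurableSet.univ, Measure.restrict_univ]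
    exact lintegral_congr fun y => mul_comm _ _
  rw [hRHS]
  have hkey : (ENNReal.ofReal ((18 : ℝ) ^ n *
        (A * ((N : ℝ) ^ (n : ℝ)) ^ (1 - ((n : ℝ) - k) * (2 * n - 1) / (2 * n ^ 2))))) ^ (1 / p)
      = ENNReal.ofReal (((18 : ℝ) ^ n * A) ^ (1 / p) *
          ((N : ℝ)⁻¹) ^ (1 / p * (((n : ℝ) - k) * (2 * n - 1) / (2 * n) - n))) := by
    have hX : (0 : ℝ) < ((N : ℝ) ^ (n : ℝ)) ^ (1 - ((n : ℝ) - k) * (2 * n - 1) / (2 * n ^ 2)) := by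
      positivity
    have hR : (0 : ℝ) < (18 : ℝ) ^ n *
        (A * ((N : ℝ) ^ (n : ℝ)) ^ (1 - ((n : ℝ) - k) * (2 * n - 1) / (2 * n ^ 2))) := by
      positivity
    rw [ENNReal.ofReal_rpow_of_pos hR]
    congr 1
    have hsplit : (18 : ℝ) ^ n *
        (A * ((N : ℝ) ^ (n : ℝ)) ^ (1 - ((n : ℝ) - k) * (2 * n - 1) / (2 * n ^ 2)))
        = ((18 : ℝ) ^ n * A) *
          ((N : ℝ) ^ (n : ℝ)) ^ (1 - ((n : ℝ) - k) * (2 * n - 1) / (2 * n ^ 2)) := by ring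
    rw [hsplit, Real.mul_rpow (by positivity) hX.le]
    congr 1
    have hn0 : (n : ℝ) ≠ 0 := by
      have : 0 < n := lt_of_le_of_lt (Nat.zero_le k) hkn
      exact_mod_cast this.ne'
    rw [← Real.rpow_mul hNR.le, ← Real.rpow_mul hNR.le,
      Real.inv_rpow hNR.le, ← Real.rpow_neg hNR.le]
    congr 1
    field_simp
    ring
  calc (∫⁻ x, (‖linMax k N z ρ sel ((N : ℝ)⁻¹) f x‖₊ : ℝ≥0∞) ^ p
        ∂((wMeasure w).restrict (unitCube z))) ^ (1 / p)
      ≤ (ApLoc k N z ρ sel w p *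
          (ENNReal.ofReal ((18 : ℝ) ^ n *
            (A * ((N : ℝ) ^ (n : ℝ)) ^ (1 - ((n : ℝ) - k) * (2 * n - 1) / (2 * n ^ 2)))) *
            ν Set.univ)) ^ (1 / p) := ENNReal.rpow_le_rpow hLHS (by positivity)
  _ = ENNReal.ofReal (((18 : ℝ) ^ n * A) ^ (1 / p) *
        ((N : ℝ)⁻¹) ^ (1 / p * (((n : ℝ) - k) * (2 * n - 1) / (2 * n) - n))) *
        ApLoc k N z ρ sel w p ^ (1 / p) * ν Set.univ ^ (1 / p) := by
      rw [ENNReal.mul_rpow_of_nonneg _ _ (by positivity : (0:ℝ) ≤ 1 / p),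
        ENNReal.mul_rpow_of_nonneg _ _ (by positivity : (0:ℝ) ≤ 1 / p), hkey]
      ring

end
end
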